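/- arXiv:1412.5193 — 3 statements merged into one kernel-verified Lean document; each statement's English description precedes it below -/
import Mathlib

section
/- Let A be a skew PBW extension of a ring R with respect to x₁,…,xₙ, with parameters σᵢ, δᵢ, c_{ij}, d_{ij}, a_{ij}^{(k)}. Let B be a ring with a ring homomorphism φ : R → B and elements y₁,…,yₙ ∈ B satisfying (i) yᵢ φ(r) = φ(σᵢ(r)) yᵢ + φ(δᵢ(r)) for every r ∈ R, and (ii) y_j yᵢ = φ(c_{ij}) yᵢ y_j + φ(a_{ij}^{(1)}) y₁ + ⋯ + φ(a_{ij}^{(n)}) yₙ + φ(d_{ij}) for all i < j. Suppose (B, φ, y₁,…,yₙ) itself satisfies the universal property: for any ring C with ring homomorphism ψ : R → C and elements z₁,…,zₙ ∈ C satisfying (i) and (ii) with respect to the same parameters, there exists a unique ring homomorphism ψ̃ : B → C with ψ̃ ∘ φ = ψ and ψ̃(yᵢ) = zᵢ. Then B ≅ A as rings, and the monomials y₁^{α₁}⋯yₙ^{αₙ}, α ∈ ℕⁿ, form a basis of B as a left R-module (with R acting via φ). -/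
/-! ## Skew PBW extensions -/

/-- The standard monomial `x₁^{α₁} ⋯ xₙ^{αₙ}`, the factors taken in increasing index order. -/
def xmon {A : Type} [Ring A] {n : ℕ} (x : Fin n → A) (α : Fin n → ℕ) : A :=
  ((List.finRange n).map (fun i => x i ^ α i)).prod

section aux
variable {A : Type} [Ring A] {n : ℕ}

def xtail (x : Fin n → A) (α : Fin n → ℕ) (m : ℕ) : A :=
  (((List.finRange n).drop m).map (fun i => x i ^ α i)).prod

lemma xtail_of_le (x : Fin n → A) (α : Fin n → ℕ) {m : ℕ} (h : n ≤ m) : xtail x α m = 1 := by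
  unfold xtail
  rw [List.drop_eq_nil_of_le (by simpa using h)]
  simp

lemma xtail_succ (x : Fin n → A) (α : Fin n → ℕ) {m : ℕ} (h : m < n) :
    xtail x α m = x ⟨m, h⟩ ^ α ⟨m, h⟩ * xtail x α (m + 1) := by
  unfold xtail
  rw [List.drop_eq_getElem_cons (by simpa using h), List.map_cons, List.prod_cons]
  simp

lemma xmon_eq_xtail (x : Fin n → A) (α : Fin n → ℕ) (m : ℕ)
    (h : ∀ k : Fin n, k.val < m → α k = 0) : xmon x α = xtail x α m := by
  induction m with
  | zero => rfl
  | succ m ih =>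
    rcases le_or_gt n m with hm | hm
    · rw [ih (fun k hk => h k (Nat.lt_succ_of_lt hk)), xtail_of_le x α hm,
        xtail_of_le x α (le_trans hm (Nat.le_succ m))]
    · rw [ih (fun k hk => h k (Nat.lt_succ_of_lt hk)), xtail_succ x α hm,
        h ⟨m, hm⟩ (Nat.lt_succ_self m), pow_zero, one_mul]

lemma xtail_congr (x : Fin n → A) (α β : Fin n → ℕ) (m : ℕ)
    (h : ∀ k : Fin n, m ≤ k.val → α k = β k) : xtail x α m = xtail x β m := by
  have key : ∀ (e m : ℕ), n - m ≤ e → (∀ k : Fin n, m ≤ k.val → α k = β k) →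
      xtail x α m = xtail x β m := by
    intro e
    induction e with
    | zero => intro m hm _; rw [xtail_of_le x α (by omega), xtail_of_le x β (by omega)]
    | succ e ih =>
      intro m hm h
      rcases le_or_gt n m with h' | h'
      · rw [xtail_of_le x α h', xtail_of_le x β h']
      · rw [xtail_succ x α h', xtail_succ x β h', h ⟨m, h'⟩ le_rfl,
          ih (m + 1) (by omega) (fun k hk => h k (by omega))]
  exact key (n - m) m le_rfl h

lemma xmon_mul_update (x : Fin n → A) (α : Fin n → ℕ) (i : Fin n)
    (h : ∀ k, k < i → α k = 0) :
    x i * xmon x α = xmon x (Function.update α i (α i + 1)) := by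
  have h0 : ∀ k : Fin n, k.val < i.val → α k = 0 := fun k hk => h k hk
  have h1 : ∀ k : Fin n, k.val < i.val → Function.update α i (α i + 1) k = 0 := by
    intro k hk
    rw [Function.update_of_ne (by exact Fin.ne_of_lt hk)]
    exact h0 k hk
  rw [xmon_eq_xtail x α i.val h0, xmon_eq_xtail x _ i.val h1,
    xtail_succ x α i.isLt, xtail_succ x _ i.isLt]
  simp only [Fin.eta, Function.update_self]
  rw [xtail_congr x (Function.update α i (α i + 1)) α (i.val + 1)
    (fun k hk => Function.update_of_ne (by
      intro hki; subst hki; omega) _ _)]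
  rw [← mul_assoc, ← pow_succ']

lemma xmon_decomp (x : Fin n → A) (α : Fin n → ℕ) (j : Fin n)
    (h0 : ∀ k, k < j → α k = 0) (h1 : α j ≠ 0) :
    xmon x α = x j * xmon x (Function.update α j (α j - 1)) := by
  set β := Function.update α j (α j - 1) with hβ
  have hb0 : ∀ k, k < j → β k = 0 := by
    intro k hk
    rw [hβ, Function.update_of_ne (Fin.ne_of_lt hk)]
    exact h0 k hk
  rw [xmon_mul_update x β j hb0]
  congr 1
  funext k
  by_cases hk : k = j
  · subst hk; simp [hβ]; omega
  · simp [hβ, Function.update_of_ne hk]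

lemma map_xmon {B : Type} [Ring B] (f : A →+* B) (x : Fin n → A) (α : Fin n → ℕ) :
    f (xmon x α) = xmon (fun i => f (x i)) α := by
  unfold xmon
  rw [map_list_prod, List.map_map]
  congr 1
  simp [Function.comp_def, map_pow]

lemma xmon_zero {B : Type} [Ring B] (y : Fin n → B) : xmon y 0 = 1 := by
  simp [xmon]

lemma xmon_single {B : Type} [Ring B] (y : Fin n → B) (i : Fin n) :
    xmon y (Function.update (0 : Fin n → ℕ) i 1) = y i := by
  have := xmon_mul_update y 0 i (fun k _ => rfl)
  rw [xmon_zero, mul_one] at this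
  simpa using this.symm

lemma sum_update_nat {n : ℕ} (α : Fin n → ℕ) (j : Fin n) (m : ℕ) :
    (∑ k, Function.update α j m k) + α j = (∑ k, α k) + m := by
  rw [Finset.sum_update_of_mem (Finset.mem_univ j),
    ← Finset.add_sum_erase _ α (Finset.mem_univ j), Finset.erase_eq]
  omega

lemma mulLeft_closure_le {B : Type} [Ring B] (b : B) (s : Set B) (T : AddSubgroup B)
    (h : ∀ g ∈ s, b * g ∈ T) : ∀ m ∈ AddSubgroup.closure s, b * m ∈ T := by
  intro m hm
  induction hm using AddSubgroup.closure_induction with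
  | mem g hg => exact h g hg
  | zero => rw [mul_zero]; exact zero_mem T
  | add u v _ _ hu hv => rw [mul_add]; exact add_mem hu hv
  | neg u _ hu => rw [mul_neg]; exact neg_mem hu

lemma mulRight_closure_le {B : Type} [Ring B] (b : B) (s : Set B) (T : AddSubgroup B)
    (h : ∀ g ∈ s, g * b ∈ T) : ∀ m ∈ AddSubgroup.closure s, m * b ∈ T := by
  intro m hm
  induction hm using AddSubgroup.closure_induction with
  | mem g hg => exact h g hg
  | zero => rw [zero_mul]; exact zero_mem T
  | add u v _ _ hu hv => rw [add_mul]; exact add_mem hu hv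
  | neg u _ hu => rw [neg_mul]; exact neg_mem hu

end aux

def genSet {R B : Type} [Ring B] {n : ℕ} (φ : R → B) (y : Fin n → B) (e : ℕ) : Set B :=
  {b | ∃ r : R, ∃ γ : Fin n → ℕ, (∑ k, γ k) ≤ e ∧ φ r * xmon y γ = b}

def genAll {R B : Type} [Ring B] {n : ℕ} (φ : R → B) (y : Fin n → B) : Set B :=
  {b | ∃ r : R, ∃ γ : Fin n → ℕ, φ r * xmon y γ = b}

section straight
variable {R B : Type} [Ring R] [Ring B] {n : ℕ}

lemma phi_mul_closure (φ : R →+* B) (y : Fin n → B) (s : R) (e : ℕ) :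
    ∀ m ∈ AddSubgroup.closure (genSet (⇑φ) y e),
      φ s * m ∈ AddSubgroup.closure (genSet (⇑φ) y e) := by
  apply mulLeft_closure_le
  rintro g ⟨r, γ, hγ, rfl⟩
  exact AddSubgroup.subset_closure ⟨s * r, γ, hγ, by rw [map_mul, mul_assoc]⟩

lemma phi_mul_closure_all (φ : R →+* B) (y : Fin n → B) (s : R) :
    ∀ m ∈ AddSubgroup.closure (genAll (⇑φ) y),
      φ s * m ∈ AddSubgroup.closure (genAll (⇑φ) y) := by
  apply mulLeft_closure_le
  rintro g ⟨r, γ, rfl⟩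
  exact AddSubgroup.subset_closure ⟨s * r, γ, by rw [map_mul, mul_assoc]⟩

lemma genSet_mono (φ : R → B) (y : Fin n → B) {e e' : ℕ} (h : e ≤ e') :
    AddSubgroup.closure (genSet φ y e) ≤ AddSubgroup.closure (genSet φ y e') :=
  AddSubgroup.closure_mono (fun b ⟨r, γ, hγ, hb⟩ => ⟨r, γ, le_trans hγ h, hb⟩)

lemma genSet_le_all (φ : R → B) (y : Fin n → B) (e : ℕ) :
    AddSubgroup.closure (genSet φ y e) ≤ AddSubgroup.closure (genAll φ y) :=
  AddSubgroup.closure_mono (fun b ⟨r, γ, _, hb⟩ => ⟨r, γ, hb⟩)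

lemma straighten (φ : R →+* B) (y : Fin n → B) (σ δ : Fin n → R → R)
    (c d : Fin n → Fin n → R) (a : Fin n → Fin n → Fin n → R)
    (hy1 : ∀ (i : Fin n) (r : R), y i * φ r = φ (σ i r) * y i + φ (δ i r))
    (hy2 : ∀ i j : Fin n, i < j →
      y j * y i = φ (c i j) * (y i * y j) + (∑ k, φ (a i j k) * y k) + φ (d i j)) :
    ∀ (N : ℕ) (i : Fin n) (α : Fin n → ℕ), (n + 1) * (∑ k, α k) + i.val < N →
      y i * xmon y α ∈ AddSubgroup.closure (genSet (⇑φ) y ((∑ k, α k) + 1)) := by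
  intro N
  induction N with
  | zero => intro i α h; omega
  | succ N IH =>
    intro i α hN
    by_cases hex : ∃ j, j < i ∧ α j ≠ 0
    · have hne : (Finset.univ.filter (fun k => α k ≠ 0)).Nonempty := by
        obtain ⟨j, _, hj⟩ := hex
        exact ⟨j, Finset.mem_filter.2 ⟨Finset.mem_univ _, hj⟩⟩
      set j := (Finset.univ.filter (fun k => α k ≠ 0)).min' hne with hjdef
      have hj1 : α j ≠ 0 :=
        (Finset.mem_filter.1 ((Finset.univ.filter (fun k => α k ≠ 0)).min'_mem hne)).2
      have hj2 : j < i := by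
        obtain ⟨j', hj'i, hj'⟩ := hex
        exact lt_of_le_of_lt
          (Finset.min'_le _ j' (Finset.mem_filter.2 ⟨Finset.mem_univ _, hj'⟩)) hj'i
      have hj3 : ∀ k, k < j → α k = 0 := by
        intro k hk
        by_contra hk0
        exact absurd (Finset.min'_le _ k (Finset.mem_filter.2 ⟨Finset.mem_univ _, hk0⟩))
          (not_le.2 hk)
      set β := Function.update α j (α j - 1) with hβdef
      have hdec : xmon y α = y j * xmon y β := xmon_decomp y α j hj3 hj1
      have hdeg : (∑ k, β k) + 1 = ∑ k, α k := by
        have h := sum_update_nat α j (α j - 1)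
        rw [← hβdef] at h
        have hj1' := hj1
        omega
      have hβN : ∀ k : Fin n, (n + 1) * (∑ k', β k') + (k : ℕ) < N := by
        intro k
        have hk := k.isLt
        have hq : (n + 1) * (∑ k', β k') + (n + 1) = (n + 1) * (∑ k', α k') := by
          rw [← hdeg]; ring
        omega
      have h1 : y i * xmon y β ∈ AddSubgroup.closure (genSet (⇑φ) y (∑ k, α k)) := by
        have := IH i β (by have := hβN i; have := i.isLt; omega)
        rwa [hdeg] at this
      have h2 : ∀ k : Fin n, y k * xmon y β ∈ AddSubgroup.closure (genSet (⇑φ) y (∑ k, α k)) := by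
        intro k
        have := IH k β (hβN k)
        rwa [hdeg] at this
      have h3 : ∀ m ∈ AddSubgroup.closure (genSet (⇑φ) y (∑ k, α k)),
          y j * m ∈ AddSubgroup.closure (genSet (⇑φ) y ((∑ k, α k) + 1)) := by
        apply mulLeft_closure_le
        rintro g ⟨r, γ, hγ, rfl⟩
        have e1 : y j * (φ r * xmon y γ) = φ (σ j r) * (y j * xmon y γ) + φ (δ j r) * xmon y γ := by
          rw [← mul_assoc, hy1 j r, add_mul, mul_assoc]
        rw [e1]
        refine add_mem ?_ (AddSubgroup.subset_closure ⟨δ j r, γ, by omega, rfl⟩)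
        apply phi_mul_closure
        have hle : (n + 1) * (∑ k, γ k) ≤ (n + 1) * (∑ k, α k) := Nat.mul_le_mul_left _ hγ
        have hji : (j : ℕ) < (i : ℕ) := hj2
        exact genSet_mono _ _ (by omega) (IH j γ (by omega))
      have expand : y i * xmon y α
          = φ (c j i) * (y j * (y i * xmon y β)) + (∑ k, φ (a j i k) * (y k * xmon y β))
            + φ (d j i) * xmon y β := by
        rw [hdec, ← mul_assoc, hy2 j i hj2, add_mul, add_mul, Finset.sum_mul]
        simp only [mul_assoc]
      rw [expand]
      refine add_mem (add_mem ?_ ?_) ?_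
      · exact phi_mul_closure φ y _ _ _ (h3 _ h1)
      · exact sum_mem (fun k _ =>
          phi_mul_closure φ y _ _ _ (genSet_mono _ _ (Nat.le_succ _) (h2 k)))
      · exact AddSubgroup.subset_closure ⟨d j i, β, by omega, rfl⟩
    · push_neg at hex
      rw [xmon_mul_update y α i (fun k hk => hex k hk)]
      refine AddSubgroup.subset_closure
        ⟨1, Function.update α i (α i + 1), ?_, by rw [map_one, one_mul]⟩
      have := sum_update_nat α i (α i + 1)
      omega

end straight

/-- `A` is a skew PBW extension of the subring `S ⊆ A` with respect to `x₁,…,xₙ`. -/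
structure IsSkewPBWExt {A : Type} [Ring A] {n : ℕ} (S : Subring A) (x : Fin n → A) : Prop where
  linearIndependent : LinearIndependent S (xmon x)
  spans : Submodule.span S (Set.range (xmon x)) = ⊤
  comm_coeff : ∀ (i : Fin n) (r : A), r ∈ S → r ≠ 0 →
    ∃ c ∈ S, c ≠ 0 ∧ x i * r - c * x i ∈ S
  comm_vars : ∀ i j : Fin n, ∃ c ∈ S, c ≠ 0 ∧
    x j * x i - c * (x i * x j) ∈ Submodule.span S (insert (1 : A) (Set.range x))

/-- If `(B, φ, y₁,…,yₙ)` satisfies relations (i)–(ii) with respect to the parameters of the skew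
PBW extension `A` of `R`, and `(B, φ, y)` itself satisfies the universal property, then
`B ≅ A` as rings, and the monomials `y₁^{α₁} ⋯ yₙ^{αₙ}` form a basis of `B` as a left
`R`-module (with `R` acting via `φ`). -/
theorem skewPBW_universal_characterization {A : Type} [Ring A] {n : ℕ}
    (S : Subring A) (x : Fin n → A) (hA : IsSkewPBWExt S x)
    -- the parameters of A
    (σ : Fin n → S →+* S) (hσinj : ∀ i, Function.Injective (σ i))
    (δ : Fin n → S → S)
    (hδadd : ∀ (i : Fin n) (r s : S), δ i (r + s) = δ i r + δ i s)
    (hδmul : ∀ (i : Fin n) (r s : S), δ i (r * s) = σ i r * δ i s + δ i r * s)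
    (hσδ : ∀ (i : Fin n) (r : S), x i * (r : A) = (σ i r : A) * x i + (δ i r : A))
    (c d : Fin n → Fin n → S) (a : Fin n → Fin n → Fin n → S)
    (hcda : ∀ i j : Fin n, i < j →
      x j * x i = (c i j : A) * (x i * x j) + (∑ k, (a i j k : A) * x k) + (d i j : A))
    -- the data in B, satisfying (i) and (ii)
    {B : Type} [Ring B] (φ : S →+* B) (y : Fin n → B)
    (hy1 : ∀ (i : Fin n) (r : S), y i * φ r = φ (σ i r) * y i + φ (δ i r))
    (hy2 : ∀ i j : Fin n, i < j →
      y j * y i = φ (c i j) * (y i * y j) + (∑ k, φ (a i j k) * y k) + φ (d i j))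
    -- B itself satisfies the universal property
    (hUP : ∀ (C : Type) [Ring C] (ψ : S →+* C) (z : Fin n → C),
      (∀ (i : Fin n) (r : S), z i * ψ r = ψ (σ i r) * z i + ψ (δ i r)) →
      (∀ i j : Fin n, i < j →
        z j * z i = ψ (c i j) * (z i * z j) + (∑ k, ψ (a i j k) * z k) + ψ (d i j)) →
      ∃! ψt : B →+* C, (∀ r : S, ψt (φ r) = ψ r) ∧ (∀ i, ψt (y i) = z i)) :
    (∃ e : A ≃+* B, (∀ r : S, e r = φ r) ∧ (∀ i, e (x i) = y i)) ∧
      Function.Bijective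
        (fun f : (Fin n → ℕ) →₀ S => f.sum (fun α r => φ r * xmon y α)) := by

  classical
  -- Step 1: the span of `φ r * xmon y α` is all of `B`.
  have hkey : ∀ (i : Fin n) (α : Fin n → ℕ),
      y i * xmon y α ∈ AddSubgroup.closure (genAll (⇑φ) y) := by
    intro i α
    refine genSet_le_all _ _ _
      (straighten φ y (fun i => ⇑(σ i)) δ c d a hy1 hy2
        ((n + 1) * (∑ k, α k) + (i : ℕ) + 1) i α (by omega))
  have hyMul : ∀ (i : Fin n), ∀ m ∈ AddSubgroup.closure (genAll (⇑φ) y),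
      y i * m ∈ AddSubgroup.closure (genAll (⇑φ) y) := by
    intro i
    apply mulLeft_closure_le
    rintro g ⟨r, γ, rfl⟩
    have e1 : y i * (φ r * xmon y γ)
        = φ (σ i r) * (y i * xmon y γ) + φ (δ i r) * xmon y γ := by
      rw [← mul_assoc, hy1 i r, add_mul, mul_assoc]
    rw [e1]
    exact add_mem (phi_mul_closure_all φ y _ _ (hkey i γ))
      (AddSubgroup.subset_closure ⟨δ i r, γ, rfl⟩)
  have hmonMul : ∀ (α : Fin n → ℕ), ∀ m ∈ AddSubgroup.closure (genAll (⇑φ) y),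
      xmon y α * m ∈ AddSubgroup.closure (genAll (⇑φ) y) := by
    intro α
    let U : Submonoid B :=
      { carrier := {u : B | ∀ m ∈ AddSubgroup.closure (genAll (⇑φ) y),
          u * m ∈ AddSubgroup.closure (genAll (⇑φ) y)}
        one_mem' := by intro m hm; rwa [one_mul]
        mul_mem' := by
          intro u v hu hv m hm
          rw [mul_assoc]
          exact hu _ (hv _ hm) }
    have : xmon y α ∈ U := by
      unfold xmon
      apply Submonoid.list_prod_mem
      intro u hu
      simp only [List.mem_map] at hu
      obtain ⟨i, _, rfl⟩ := hu
      have hyU : y i ∈ U := hyMul i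
      exact pow_mem hyU _
    exact this
  have hmulM : ∀ m ∈ AddSubgroup.closure (genAll (⇑φ) y),
      ∀ m' ∈ AddSubgroup.closure (genAll (⇑φ) y),
        m * m' ∈ AddSubgroup.closure (genAll (⇑φ) y) := by
    intro m hm m' hm'
    refine mulRight_closure_le m' _ _ ?_ m hm
    rintro g ⟨r, γ, rfl⟩
    rw [mul_assoc]
    exact phi_mul_closure_all φ y r _ (hmonMul γ m' hm')
  have hmemφ : ∀ r : S, φ r ∈ AddSubgroup.closure (genAll (⇑φ) y) :=
    fun r => AddSubgroup.subset_closure ⟨r, 0, by rw [xmon_zero, mul_one]⟩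
  have hmemy : ∀ i, y i ∈ AddSubgroup.closure (genAll (⇑φ) y) :=
    fun i => AddSubgroup.subset_closure
      ⟨1, Function.update 0 i 1, by rw [map_one, one_mul, xmon_single]⟩
  set MR : Subring B :=
    { carrier := AddSubgroup.closure (genAll (⇑φ) y)
      mul_mem' := fun ha hb => hmulM _ ha _ hb
      one_mem' := AddSubgroup.subset_closure ⟨1, 0, by rw [map_one, one_mul, xmon_zero]⟩
      add_mem' := fun ha hb => add_mem ha hb
      zero_mem' := zero_mem _
      neg_mem' := fun ha => neg_mem ha } with hMR
  have hmemφ' : ∀ r : S, φ r ∈ MR := hmemφ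
  have hmemy' : ∀ i, y i ∈ MR := hmemy
  set φ' : S →+* MR :=
    { toFun := fun r => ⟨φ r, hmemφ' r⟩
      map_one' := Subtype.ext (map_one φ)
      map_mul' := fun u v => Subtype.ext (map_mul φ u v)
      map_zero' := Subtype.ext (map_zero φ)
      map_add' := fun u v => Subtype.ext (map_add φ u v) } with hφ'
  set y' : Fin n → MR := fun i => ⟨y i, hmemy' i⟩ with hy'
  have rel1' : ∀ (i : Fin n) (r : S), y' i * φ' r = φ' (σ i r) * y' i + φ' (δ i r) :=
    fun i r => Subtype.ext (hy1 i r)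
  have rel2' : ∀ i j : Fin n, i < j →
      y' j * y' i = φ' (c i j) * (y' i * y' j) + (∑ k, φ' (a i j k) * y' k) + φ' (d i j) := by
    intro i j hij
    refine Subtype.ext ?_
    have hs : ((∑ k, φ' (a i j k) * y' k : MR) : B) = ∑ k, φ (a i j k) * y k :=
      map_sum MR.subtype _ _
    show y j * y i
      = φ (c i j) * (y i * y j) + ((∑ k, φ' (a i j k) * y' k : MR) : B) + φ (d i j)
    rw [hs]
    exact hy2 i j hij
  obtain ⟨Ψ, hΨ, -⟩ := hUP MR φ' y' rel1' rel2'
  obtain ⟨θ, -, hθuniq⟩ := hUP B φ y hy1 hy2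
  have hcomp : MR.subtype.comp Ψ = θ := by
    refine hθuniq _ ⟨fun r => ?_, fun i => ?_⟩
    · show MR.subtype (Ψ (φ r)) = φ r
      rw [hΨ.1 r]; rfl
    · show MR.subtype (Ψ (y i)) = y i
      rw [hΨ.2 i]; rfl
  have hid : RingHom.id B = θ := hθuniq _ ⟨fun r => rfl, fun i => rfl⟩
  have hMtop : ∀ b : B, b ∈ AddSubgroup.closure (genAll (⇑φ) y) := by
    intro b
    have heq : MR.subtype.comp Ψ = RingHom.id B := hcomp.trans hid.symm
    have hb : ((Ψ b : MR) : B) = b := RingHom.congr_fun heq b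
    rw [← hb]
    exact (Ψ b).2
  -- Step 2: the homomorphism B → A from the universal property.
  have rel1A : ∀ (i : Fin n) (r : S),
      x i * S.subtype r = S.subtype (σ i r) * x i + S.subtype (δ i r) := hσδ
  have rel2A : ∀ i j : Fin n, i < j → x j * x i
      = S.subtype (c i j) * (x i * x j) + (∑ k, S.subtype (a i j k) * x k) + S.subtype (d i j) :=
    hcda
  obtain ⟨ψt, hψ, -⟩ := hUP A S.subtype x rel1A rel2A
  have hψmon : ∀ α, ψt (xmon y α) = xmon x α := by
    intro α
    rw [map_xmon]
    have hx : (fun i => ψt (y i)) = x := funext hψ.2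
    rw [hx]
  have hψF : ∀ f : (Fin n → ℕ) →₀ S,
      ψt (f.sum fun α r => φ r * xmon y α) = Finsupp.linearCombination S (xmon x) f := by
    intro f
    rw [Finsupp.linearCombination_apply, Finsupp.sum, Finsupp.sum, map_sum]
    refine Finset.sum_congr rfl (fun α _ => ?_)
    rw [map_mul, hψ.1, hψmon]
    rfl
  have hGinj : Function.Injective ⇑(Finsupp.linearCombination S (xmon x)) :=
    hA.linearIndependent
  have hGsurj : Function.Surjective ⇑(Finsupp.linearCombination S (xmon x)) := by
    intro b
    have hb : b ∈ LinearMap.range (Finsupp.linearCombination S (xmon x)) := by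
      rw [Finsupp.range_linearCombination, hA.spans]; trivial
    exact hb
  have hFinj : Function.Injective
      (fun f : (Fin n → ℕ) →₀ S => f.sum fun α r => φ r * xmon y α) := by
    intro f g h
    apply hGinj
    rw [← hψF, ← hψF]
    simpa using congrArg ψt h
  have hFrange : ∀ b : B, ∃ f : (Fin n → ℕ) →₀ S, (f.sum fun α r => φ r * xmon y α) = b := by
    intro b
    have hb := hMtop b
    induction hb using AddSubgroup.closure_induction with
    | mem g hg =>
      obtain ⟨r, γ, rfl⟩ := hg
      exact ⟨Finsupp.single γ r, Finsupp.sum_single_index (by rw [map_zero, zero_mul])⟩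
    | zero => exact ⟨0, Finsupp.sum_zero_index⟩
    | add u v hu hv ihu ihv =>
      obtain ⟨f, rfl⟩ := ihu
      obtain ⟨g, rfl⟩ := ihv
      exact ⟨f + g, Finsupp.sum_add_index' (fun α => by rw [map_zero, zero_mul])
        (fun α r s => by rw [map_add, add_mul])⟩
    | neg u hu ihu =>
      obtain ⟨f, rfl⟩ := ihu
      refine ⟨-f, ?_⟩
      rw [Finsupp.sum_neg_index (fun α => by rw [map_zero, zero_mul])]
      rw [Finsupp.sum, Finsupp.sum, ← Finset.sum_neg_distrib]
      exact Finset.sum_congr rfl (fun α _ => by rw [map_neg, neg_mul])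
  have hψsurj : Function.Surjective ⇑ψt := by
    intro a'
    obtain ⟨f, hf⟩ := hGsurj a'
    exact ⟨f.sum fun α r => φ r * xmon y α, by rw [hψF, hf]⟩
  have hψinj : Function.Injective ⇑ψt := by
    intro b b' h
    obtain ⟨f, rfl⟩ := hFrange b
    obtain ⟨g, rfl⟩ := hFrange b'
    have hfg : Finsupp.linearCombination S (xmon x) f = Finsupp.linearCombination S (xmon x) g := by
      rw [← hψF, ← hψF, h]
    rw [hGinj hfg]
  set E := RingEquiv.ofBijective ψt ⟨hψinj, hψsurj⟩ with hE
  refine ⟨⟨E.symm, fun r => ?_, fun i => ?_⟩, hFinj, fun b => hFrange b⟩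
  · have h1 : E (φ r) = (r : A) := hψ.1 r
    rw [← h1, RingEquiv.symm_apply_apply]
  · have h1 : E (y i) = x i := hψ.2 i
    rw [← h1, RingEquiv.symm_apply_apply]
end

section
/- (Poincaré–Birkhoff–Witt theorem.) Let K be a field and 𝒢 a finite-dimensional Lie algebra over K with K-basis y₁,…,yₙ. Then the standard monomials ι(y₁)^{α₁}⋯ι(yₙ)^{αₙ}, with αᵢ ≥ 0 for 1 ≤ i ≤ n, form a K-basis of the universal enveloping algebra 𝒰(𝒢), where ι : 𝒢 → 𝒰(𝒢) is the canonical map. -/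
namespace PBWaux

attribute [local instance 100] LieRing.ofAssociativeRing

variable {K : Type} [Field K] {L : Type} [LieRing L] [LieAlgebra K L] {n : ℕ}

/-- The free `K`-module on monomials (multisets over `Fin n`). -/
abbrev Pm (K : Type) [Field K] (n : ℕ) : Type := Multiset (Fin n) →₀ K

/-- the minimum of a nonempty multiset -/
noncomputable def mmin (J : Multiset (Fin n)) (h : J ≠ 0) : Fin n :=
  J.toFinset.min' (Multiset.toFinset_nonempty.2 h)

lemma mmin_mem {J : Multiset (Fin n)} (h : J ≠ 0) : mmin J h ∈ J := by
  have := J.toFinset.min'_mem (Multiset.toFinset_nonempty.2 h)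
  exact Multiset.mem_toFinset.1 this

lemma mmin_le {J : Multiset (Fin n)} (h : J ≠ 0) {x : Fin n} (hx : x ∈ J) : mmin J h ≤ x :=
  J.toFinset.min'_le x (Multiset.mem_toFinset.2 hx)

variable (y : Module.Basis (Fin n) K L)

/-- Jacobson's recursively-defined action `S d i J = σ(yᵢ)(x_J)` (valid for `card J ≤ d`). -/
noncomputable def S : ℕ → Fin n → Multiset (Fin n) → Pm K n
  | 0, i, J =>
    if _ : ∀ x ∈ J, i ≤ x then Finsupp.single (i ::ₘ J) 1 else 0
  | (e+1), i, J =>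
    if _ : ∀ x ∈ J, i ≤ x then Finsupp.single (i ::ₘ J) 1
    else
      have hJ : J ≠ 0 := by
        rintro rfl; simp_all
      have hm : mmin J hJ < i := by
        push_neg at *
        obtain ⟨x, hx, hxi⟩ := ‹∃ x ∈ J, x < i›
        exact lt_of_le_of_lt (mmin_le hJ hx) hxi
      (S e i (J.erase (mmin J hJ))).sum (fun M c => c • S (e+1) (mmin J hJ) M)
        + (y.repr ⁅y i, y (mmin J hJ)⁆).sum (fun k c => c • S e k (J.erase (mmin J hJ)))
  termination_by d i _ => (d, i.val)
  decreasing_by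
  · exact Prod.Lex.left _ _ (Nat.lt_succ_self e)
  · exact Prod.Lex.right _ hm
  · exact Prod.Lex.left _ _ (Nat.lt_succ_self e)

lemma S_pos {d : ℕ} {i : Fin n} {J : Multiset (Fin n)} (h : ∀ x ∈ J, i ≤ x) :
    S y d i J = Finsupp.single (i ::ₘ J) 1 := by
  cases d <;> (rw [S]; rw [dif_pos h])

lemma S_neg {e : ℕ} {i : Fin n} {J : Multiset (Fin n)} (h : ¬ ∀ x ∈ J, i ≤ x) (hJ : J ≠ 0) :
    S y (e+1) i J =
      (S y e i (J.erase (mmin J hJ))).sum (fun M c => c • S y (e+1) (mmin J hJ) M)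
        + (y.repr ⁅y i, y (mmin J hJ)⁆).sum (fun k c => c • S y e k (J.erase (mmin J hJ))) := by
  rw [S]
  rw [dif_neg h]

/-- strong induction on the measure `d * n + i`. -/
lemma measure_ind {C : ℕ → Fin n → Prop}
    (H : ∀ (d : ℕ) (i : Fin n), (∀ (d' : ℕ) (i' : Fin n), d' * n + (i' : ℕ) < d * n + (i : ℕ) → C d' i') → C d i) :
    ∀ d i, C d i := by
  have key : ∀ N d (i : Fin n), d * n + (i : ℕ) = N → C d i := by
    intro N
    induction N using Nat.strong_induction_on with
    | _ N ih =>
      intro d i hN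
      exact H d i (fun d' i' h => ih _ (hN ▸ h) d' i' rfl)
  exact fun d i => key _ d i rfl

lemma lt_measure_left {e d : ℕ} (h : e < d) (i i' : Fin n) :
    e * n + (i' : ℕ) < d * n + (i : ℕ) := by
  have hi' := i'.isLt
  have h2 : e * n + n ≤ d * n := by
    have h3 : (e + 1) * n ≤ d * n := Nat.mul_le_mul_right n h
    rwa [Nat.succ_mul] at h3
  omega

lemma S_supp : ∀ (d : ℕ) (i : Fin n), ∀ (J : Multiset (Fin n)),
    ∀ M ∈ (S y d i J).support, Multiset.card M ≤ Multiset.card J + 1 := by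
  refine measure_ind
    (C := fun d i => ∀ (J : Multiset (Fin n)),
      ∀ M ∈ (S y d i J).support, Multiset.card M ≤ Multiset.card J + 1)
    (fun d i ih => ?_)
  intro J M hM
  by_cases h : ∀ x ∈ J, i ≤ x
  · rw [S_pos y h] at hM
    rw [Finsupp.support_single_ne_zero _ one_ne_zero] at hM
    simp only [Finset.mem_singleton] at hM
    subst hM
    simp
  · have hJ : J ≠ 0 := by rintro rfl; simp_all
    have hcard : 1 ≤ Multiset.card J := by
      exact Multiset.card_pos.mpr hJ
    cases d with
    | zero =>
      rw [S] at hM; rw [dif_neg h] at hM; simp at hM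
    | succ e =>
      rw [S_neg y h hJ] at hM
      set m := mmin J hJ with hmdef
      set J' := J.erase m with hJ'def
      have hJ'card : Multiset.card J' = Multiset.card J - 1 := by
        rw [hJ'def, Multiset.card_erase_of_mem (mmin_mem hJ)]; rfl
      have hmlt : m < i := by
        push_neg at h
        obtain ⟨x, hx, hxi⟩ := h
        exact lt_of_le_of_lt (mmin_le hJ hx) hxi
      have hM' := Finsupp.support_add hM
      rw [Finset.mem_union] at hM'
      rcases hM' with hA | hB
      · have := Finsupp.support_sum hA
        rw [Finset.mem_biUnion] at this
        obtain ⟨M₀, hM₀, hMM₀⟩ := this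
        have hMM₀' : M ∈ (S y (e+1) m M₀).support :=
          Finsupp.support_smul hMM₀
        have h1 : Multiset.card M₀ ≤ Multiset.card J' + 1 :=
          ih e i (lt_measure_left (Nat.lt_succ_self e) i i) J' M₀ hM₀
        have h2 : Multiset.card M ≤ Multiset.card M₀ + 1 := by
          refine ih (e+1) m ?_ M₀ M hMM₀'
          exact Nat.add_lt_add_left hmlt _
        omega
      · have := Finsupp.support_sum hB
        rw [Finset.mem_biUnion] at this
        obtain ⟨k, _, hMk⟩ := this
        have hMk' : M ∈ (S y e k J').support := Finsupp.support_smul hMk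
        have := ih e k (lt_measure_left (Nat.lt_succ_self e) i k) J' M hMk'
        omega

lemma S_succ : ∀ (d : ℕ) (i : Fin n), ∀ (J : Multiset (Fin n)),
    Multiset.card J ≤ d → S y (d+1) i J = S y d i J := by
  refine measure_ind
    (C := fun d i => ∀ (J : Multiset (Fin n)),
      Multiset.card J ≤ d → S y (d+1) i J = S y d i J)
    (fun d i ih => ?_)
  intro J hJd
  by_cases h : ∀ x ∈ J, i ≤ x
  · rw [S_pos y h, S_pos y h]
  · have hJ : J ≠ 0 := by rintro rfl; simp_all
    have hcard : 1 ≤ Multiset.card J := Multiset.card_pos.mpr hJ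
    obtain ⟨e, rfl⟩ : ∃ e, d = e + 1 := ⟨d - 1, by omega⟩
    set m := mmin J hJ with hmdef
    set J' := J.erase m with hJ'def
    have hJ'card : Multiset.card J' = Multiset.card J - 1 := by
      rw [hJ'def, Multiset.card_erase_of_mem (mmin_mem hJ)]; rfl
    have hmlt : m < i := by
      push_neg at h
      obtain ⟨x, hx, hxi⟩ := h
      exact lt_of_le_of_lt (mmin_le hJ hx) hxi
    rw [S_neg y h hJ, S_neg y h hJ]
    rw [← hmdef, ← hJ'def]
    have e1 : S y (e+1) i J' = S y e i J' := by
      refine ih e i (lt_measure_left (Nat.lt_succ_self e) i i) J' (by omega)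
    rw [e1]
    congr 1
    · refine Finsupp.sum_congr (fun M hM => ?_)
      have hMcard : Multiset.card M ≤ e + 1 := by
        have := S_supp y e i J' M hM
        omega
      rw [ih (e+1) m (Nat.add_lt_add_left hmlt _) M hMcard]
    · refine Finsupp.sum_congr (fun k _ => ?_)
      rw [ih e k (lt_measure_left (Nat.lt_succ_self e) i k) J' (by omega)]

lemma S_stable (d : ℕ) (i : Fin n) (J : Multiset (Fin n)) (h : Multiset.card J ≤ d) :
    S y d i J = S y (Multiset.card J) i J := by
  induction d with
  | zero => have : Multiset.card J = 0 := by omega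
            rw [this]
  | succ e ihe =>
    rcases Nat.lt_or_ge (Multiset.card J) (e+1) with h' | h'
    · rw [S_succ y e i J (by omega), ihe (by omega)]
    · have : Multiset.card J = e + 1 := by omega
      rw [this]

/-- the action of the `i`-th basis vector on `Pm`. -/
noncomputable def sig (i : Fin n) : Pm K n →ₗ[K] Pm K n :=
  Finsupp.lift (Pm K n) K (Multiset (Fin n)) (fun J => S y (Multiset.card J) i J)

/-- basis monomial -/
noncomputable abbrev bb (J : Multiset (Fin n)) : Pm K n := Finsupp.single J (1 : K)

lemma sig_apply (i : Fin n) (f : Pm K n) :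
    sig y i f = f.sum fun J c => c • S y (Multiset.card J) i J := by
  rfl

lemma sig_single (i : Fin n) (J : Multiset (Fin n)) :
    sig y i (bb J) = S y (Multiset.card J) i J := by
  rw [sig_apply, Finsupp.sum_single_index (by simp), one_smul]

lemma sig_pos {i : Fin n} {J : Multiset (Fin n)} (h : ∀ x ∈ J, i ≤ x) :
    sig y i (bb J) = bb (i ::ₘ J) := by
  rw [sig_single, S_pos y h]

/-- the representation of `L` on `Pm`, as a linear map. -/
noncomputable def rho : L →ₗ[K] Module.End K (Pm K n) :=
  (Finsupp.linearCombination K (fun i => sig y i)).comp (y.repr : L →ₗ[K] (Fin n →₀ K))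

lemma rho_basis (i : Fin n) : rho y (y i) = sig y i := by
  simp [rho]

lemma rho_apply (v : L) (f : Pm K n) :
    rho y v f = (y.repr v).sum fun k c => c • sig y k f := by
  rw [rho]
  simp only [LinearMap.coe_comp, Function.comp_apply, LinearEquiv.coe_coe,
    Finsupp.linearCombination_apply]
  rw [Finsupp.sum, Finsupp.sum, LinearMap.sum_apply]
  exact Finset.sum_congr rfl fun k _ => by rw [LinearMap.smul_apply]

lemma rho_single_eq_sum (v : L) (J : Multiset (Fin n)) :
    rho y v (bb J) = (y.repr v).sum fun k c => c • S y (Multiset.card J) k J := by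
  rw [rho_apply]
  exact Finsupp.sum_congr fun k _ => by rw [sig_single]

/-- the recursion satisfied by `sig`. -/
lemma sig_rec {i : Fin n} {J : Multiset (Fin n)} (hJ : J ≠ 0) (hm : mmin J hJ < i) :
    sig y i (bb J) =
      sig y (mmin J hJ) (sig y i (bb (J.erase (mmin J hJ))))
        + rho y ⁅y i, y (mmin J hJ)⁆ (bb (J.erase (mmin J hJ))) := by
  have h : ¬ ∀ x ∈ J, i ≤ x := by
    intro hall
    exact absurd (hall _ (mmin_mem hJ)) (not_le.mpr hm)
  set m := mmin J hJ with hmdef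
  set J' := J.erase m with hJ'def
  have hJcard : Multiset.card J = Multiset.card J' + 1 := by
    have h1 : Multiset.card J' = Multiset.card J - 1 := by
      rw [hJ'def, Multiset.card_erase_of_mem (mmin_mem hJ), Nat.pred_eq_sub_one]
    have h2 := Multiset.card_pos.mpr hJ
    omega
  rw [sig_single, hJcard, S_neg y h hJ, ← hmdef, ← hJ'def]
  congr 1
  · rw [sig_single, sig_apply]
    refine Finsupp.sum_congr fun M hM => ?_
    have hMc : Multiset.card M ≤ Multiset.card J' + 1 := S_supp y _ i J' M hM
    rw [S_stable y _ m M hMc]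
  · rw [rho_single_eq_sum]

/-- The commutation statement on a basis monomial. -/
abbrev CommEq (M : Multiset (Fin n)) (k l : Fin n) : Prop :=
  sig y k (sig y l (bb M)) - sig y l (sig y k (bb M)) = rho y ⁅y k, y l⁆ (bb (K := K) M)

lemma lin_expand (F : L →ₗ[K] Module.End K (Pm K n)) (v : L) (f : Pm K n) :
    F v f = (y.repr v).sum fun l c => c • F (y l) f := by
  conv_lhs => rw [← y.linearCombination_repr v]
  rw [Finsupp.linearCombination_apply, map_finsuppSum]
  rw [Finsupp.sum, Finsupp.sum, LinearMap.sum_apply]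
  refine Finset.sum_congr rfl fun l _ => ?_
  rw [map_smul, LinearMap.smul_apply]

lemma comm_ext (u v : L) (f : Pm K n)
    (hf : ∀ M ∈ f.support,
      rho y u (rho y v (bb M)) - rho y v (rho y u (bb M)) = rho y ⁅u, v⁆ (bb (K := K) M)) :
    rho y u (rho y v f) - rho y v (rho y u f) = rho y ⁅u, v⁆ f := by
  set T : Module.End K (Pm K n) :=
    rho y u * rho y v - rho y v * rho y u - rho y ⁅u, v⁆ with hT
  have h0 : ∀ M ∈ f.support, T (bb M) = 0 := by
    intro M hM
    have h := hf M hM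
    simp only [hT, LinearMap.sub_apply, Module.End.mul_apply]
    rw [sub_eq_zero]
    exact h
  have hTf : T f = 0 := by
    calc T f = T (f.sum fun M c => Finsupp.single M c) := by rw [Finsupp.sum_single]
    _ = f.sum fun M c => T (Finsupp.single M c) := map_finsuppSum _ _ _
    _ = f.sum fun M c => c • T (bb M) := Finsupp.sum_congr fun M _ => by
        rw [← map_smul, Finsupp.smul_single, smul_eq_mul, mul_one]
    _ = f.sum fun M c => (0 : Pm K n) := Finsupp.sum_congr fun M hM => by
        rw [h0 M hM, smul_zero]
    _ = 0 := Finset.sum_const_zero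
  have h2 : rho y u (rho y v f) - rho y v (rho y u f) - rho y ⁅u, v⁆ f = 0 := by
    simpa only [hT, LinearMap.sub_apply, Module.End.mul_apply] using hTf
  rw [sub_eq_zero] at h2
  exact h2

lemma comm_right (k : Fin n) (v : L) (M : Multiset (Fin n))
    (hM : ∀ l, CommEq y M k l) :
    sig y k (rho y v (bb M)) - rho y v (sig y k (bb M)) = rho y ⁅y k, v⁆ (bb (K := K) M) := by
  rw [rho_apply y v (bb M), rho_apply y v (sig y k (bb M))]
  rw [map_finsuppSum]
  have hR : rho y ⁅y k, v⁆ (bb (K := K) M)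
      = (y.repr v).sum fun l c => c • rho y ⁅y k, y l⁆ (bb M) := by
    have h := lin_expand y ((rho y).comp ((LieAlgebra.ad K L) (y k) : L →ₗ[K] L)) v (bb M)
    simpa only [LinearMap.coe_comp, Function.comp_apply, LieAlgebra.ad_apply] using h
  rw [hR, ← Finsupp.sum_sub]
  refine Finsupp.sum_congr fun l _ => ?_
  rw [map_smul, ← smul_sub, hM l]

lemma comm_uv (M : Multiset (Fin n)) (hM : ∀ k l, CommEq y M k l) (u v : L) :
    rho y u (rho y v (bb M)) - rho y v (rho y u (bb M)) = rho y ⁅u, v⁆ (bb (K := K) M) := by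
  have h1 : rho y u (rho y v (bb M))
      = (y.repr u).sum fun k c => c • sig y k (rho y v (bb M)) := rho_apply y u _
  have h2 : rho y v (rho y u (bb M))
      = (y.repr u).sum fun k c => c • rho y v (sig y k (bb M)) := by
    rw [rho_apply y u (bb M), map_finsuppSum]
    exact Finsupp.sum_congr fun k _ => map_smul _ _ _
  have h3 : rho y ⁅u, v⁆ (bb (K := K) M)
      = (y.repr u).sum fun k c => c • rho y ⁅y k, v⁆ (bb M) := by
    have h := lin_expand y ((rho y).comp (-((LieAlgebra.ad K L) v : L →ₗ[K] L))) u (bb M)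
    simpa only [LinearMap.coe_comp, Function.comp_apply, LinearMap.neg_apply,
      LieAlgebra.ad_apply, lie_skew] using h
  rw [h1, h2, h3, ← Finsupp.sum_sub]
  exact Finsupp.sum_congr fun k _ => by
    rw [← smul_sub, comm_right y k v M (fun l => hM k l)]

lemma measure_ind2 {C : Multiset (Fin n) → Fin n → Fin n → Prop}
    (H : ∀ (J : Multiset (Fin n)) (i j : Fin n),
      (∀ (J' : Multiset (Fin n)) (i' j' : Fin n),
        Multiset.card J' * (2*n) + (i' : ℕ) + (j' : ℕ)
          < Multiset.card J * (2*n) + (i : ℕ) + (j : ℕ) → C J' i' j') → C J i j) :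
    ∀ J i j, C J i j := by
  have key : ∀ N (J : Multiset (Fin n)) (i j : Fin n),
      Multiset.card J * (2*n) + (i : ℕ) + (j : ℕ) = N → C J i j := by
    intro N
    induction N using Nat.strong_induction_on with
    | _ N ih =>
      intro J i j hN
      exact H J i j (fun J' i' j' h => ih _ (hN ▸ h) J' i' j' rfl)
  exact fun J i j => key _ J i j rfl

lemma comm_low {i j : Fin n} (J : Multiset (Fin n)) (hij : j < i) (hall : ∀ x ∈ J, j ≤ x) :
    CommEq y J i j := by
  have h1 : sig y j (bb (K := K) J) = bb (j ::ₘ J) := sig_pos y hall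
  have hJ₀ : (j ::ₘ J) ≠ 0 := Multiset.cons_ne_zero
  have hmin : mmin (j ::ₘ J) hJ₀ = j := by
    refine le_antisymm (mmin_le hJ₀ (Multiset.mem_cons_self j J)) ?_
    have hmem := mmin_mem hJ₀
    rcases Multiset.mem_cons.mp hmem with h | h
    · exact le_of_eq h.symm
    · exact hall _ h
  have hrec := sig_rec y (i := i) hJ₀ (by rw [hmin]; exact hij)
  rw [hmin, Multiset.erase_cons_head] at hrec
  show sig y i (sig y j (bb J)) - sig y j (sig y i (bb J)) = rho y ⁅y i, y j⁆ (bb J)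
  rw [h1, hrec]
  abel


lemma comm_main (J : Multiset (Fin n)) (i j : Fin n) (hJ : J ≠ 0)
    (hi : mmin J hJ < i) (hj : mmin J hJ < j)
    (IHlow : ∀ M : Multiset (Fin n), Multiset.card M < Multiset.card J →
      ∀ k l, CommEq y M k l)
    (IH1 : ∀ M : Multiset (Fin n), Multiset.card M ≤ Multiset.card J →
      CommEq y M i (mmin J hJ))
    (IH2 : ∀ M : Multiset (Fin n), Multiset.card M ≤ Multiset.card J →
      CommEq y M j (mmin J hJ)) :
    CommEq y J i j := by
  set m := mmin J hJ with hm
  set J' := J.erase m with hJ'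
  have hJ'lt : Multiset.card J' < Multiset.card J := by
    rw [hJ', Multiset.card_erase_of_mem (mmin_mem hJ), Nat.pred_eq_sub_one]
    have := Multiset.card_pos.mpr hJ
    omega
  have hallJ' : ∀ x ∈ J', m ≤ x := fun x hx => mmin_le hJ (Multiset.mem_of_mem_erase hx)
  have hsuppB : (bb (K := K) J').support = {J'} := Finsupp.support_single_ne_zero _ one_ne_zero
  have hsupp : ∀ (l : Fin n), ∀ M ∈ (sig y l (bb (K := K) J')).support,
      Multiset.card M ≤ Multiset.card J := by
    intro l M hM
    rw [sig_single] at hM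
    have := S_supp y (Multiset.card J') l J' M hM
    omega
  have E1 : sig y i (bb (K := K) J)
      = sig y m (sig y i (bb J')) + rho y ⁅y i, y m⁆ (bb J') := sig_rec y hJ hi
  have E2 : sig y j (bb (K := K) J)
      = sig y m (sig y j (bb J')) + rho y ⁅y j, y m⁆ (bb J') := sig_rec y hJ hj
  -- h1
  have h1 : sig y i (sig y m (sig y j (bb (K := K) J')))
      = rho y ⁅y i, y m⁆ (sig y j (bb J')) + sig y m (sig y i (sig y j (bb J'))) := by
    have h := comm_ext y (y i) (y m) (sig y j (bb J')) (fun M hM => by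
      rw [rho_basis, rho_basis]
      exact IH1 M (hsupp j M hM))
    rw [rho_basis, rho_basis] at h
    exact sub_eq_iff_eq_add.mp h
  -- h2
  have h2 : sig y j (sig y m (sig y i (bb (K := K) J')))
      = rho y ⁅y j, y m⁆ (sig y i (bb J')) + sig y m (sig y j (sig y i (bb J'))) := by
    have h := comm_ext y (y j) (y m) (sig y i (bb J')) (fun M hM => by
      rw [rho_basis, rho_basis]
      exact IH2 M (hsupp i M hM))
    rw [rho_basis, rho_basis] at h
    exact sub_eq_iff_eq_add.mp h
  -- h3
  have h3 : sig y i (rho y ⁅y j, y m⁆ (bb (K := K) J'))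
      = rho y ⁅y i, ⁅y j, y m⁆⁆ (bb J') + rho y ⁅y j, y m⁆ (sig y i (bb J')) := by
    have h := comm_ext y (y i) ⁅y j, y m⁆ (bb J') (fun M hM => by
      rw [hsuppB, Finset.mem_singleton] at hM
      subst hM
      rw [rho_basis]
      exact comm_right y i ⁅y j, y m⁆ J' (fun l => IHlow J' hJ'lt i l))
    rw [rho_basis] at h
    exact sub_eq_iff_eq_add.mp h
  -- h4
  have h4 : sig y j (rho y ⁅y i, y m⁆ (bb (K := K) J'))
      = rho y ⁅y j, ⁅y i, y m⁆⁆ (bb J') + rho y ⁅y i, y m⁆ (sig y j (bb J')) := by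
    have h := comm_ext y (y j) ⁅y i, y m⁆ (bb J') (fun M hM => by
      rw [hsuppB, Finset.mem_singleton] at hM
      subst hM
      rw [rho_basis]
      exact comm_right y j ⁅y i, y m⁆ J' (fun l => IHlow J' hJ'lt j l))
    rw [rho_basis] at h
    exact sub_eq_iff_eq_add.mp h
  -- h5
  have hmB : sig y m (bb (K := K) J') = bb J := by
    rw [sig_pos y hallJ', hJ', hm, Multiset.cons_erase (mmin_mem hJ)]
  have hA : sig y i (sig y j (bb (K := K) J')) - sig y j (sig y i (bb J'))
      = rho y ⁅y i, y j⁆ (bb J') := IHlow J' hJ'lt i j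
  have hmix : sig y m (rho y ⁅y i, y j⁆ (bb (K := K) J'))
      = rho y ⁅y m, ⁅y i, y j⁆⁆ (bb J') + rho y ⁅y i, y j⁆ (bb J) := by
    have h := comm_ext y (y m) ⁅y i, y j⁆ (bb J') (fun M hM => by
      rw [hsuppB, Finset.mem_singleton] at hM
      subst hM
      rw [rho_basis]
      exact comm_right y m ⁅y i, y j⁆ J' (fun l => IHlow J' hJ'lt m l))
    rw [rho_basis] at h
    have h' := sub_eq_iff_eq_add.mp h
    rw [hmB] at h'
    exact h'
  have h5 : sig y m (sig y i (sig y j (bb (K := K) J')))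
      = sig y m (sig y j (sig y i (bb J')))
        + (rho y ⁅y m, ⁅y i, y j⁆⁆ (bb J') + rho y ⁅y i, y j⁆ (bb J)) := by
    have hApp := congrArg (sig y m) hA
    rw [map_sub] at hApp
    have := sub_eq_iff_eq_add.mp hApp
    rw [this, hmix]
    abel
  -- Jacobi
  have h6 : rho y ⁅y m, ⁅y i, y j⁆⁆ (bb (K := K) J')
      = rho y ⁅y j, ⁅y i, y m⁆⁆ (bb J') - rho y ⁅y i, ⁅y j, y m⁆⁆ (bb J') := by
    have hbr : (⁅y m, ⁅y i, y j⁆⁆ : L) = ⁅y j, ⁅y i, y m⁆⁆ - ⁅y i, ⁅y j, y m⁆⁆ := by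
      rw [← lie_skew (y m) ⁅y i, y j⁆, lie_lie]
      abel
    rw [hbr, map_sub, LinearMap.sub_apply]
  show sig y i (sig y j (bb J)) - sig y j (sig y i (bb J)) = rho y ⁅y i, y j⁆ (bb J)
  rw [E1, E2, map_add, map_add, h1, h2, h3, h4, h5, h6]
  abel

lemma comm_basis : ∀ (J : Multiset (Fin n)) (i j : Fin n), CommEq y J i j := by
  refine measure_ind2 (C := fun J i j => CommEq y J i j) (fun J i j ih => ?_)
  by_cases hij : i = j
  · subst hij
    simp only [CommEq, sub_self, lie_self, map_zero, LinearMap.zero_apply]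
  -- key sublemma applications
  have harith_low : ∀ (M : Multiset (Fin n)), Multiset.card M < Multiset.card J →
      ∀ k l, CommEq y M k l := by
    intro M hM k l
    refine ih M k l ?_
    have hk := k.isLt
    have hl := l.isLt
    have hmul : (Multiset.card M + 1) * (2*n) ≤ Multiset.card J * (2*n) :=
      Nat.mul_le_mul_right _ hM
    rw [add_one_mul] at hmul
    omega
  rcases Nat.lt_or_ge (j : ℕ) (i : ℕ) with hji | hle
  · have hji' : j < i := hji
    by_cases hall : ∀ x ∈ J, j ≤ x
    · exact comm_low y J hji' hall
    · push_neg at hall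
      obtain ⟨x, hx, hxj⟩ := hall
      have hJ : J ≠ 0 := by rintro rfl; simp at hx
      have hmj : mmin J hJ < j := lt_of_le_of_lt (mmin_le hJ hx) hxj
      have hmi : mmin J hJ < i := lt_trans hmj hji'
      refine comm_main y J i j hJ hmi hmj harith_low ?_ ?_
      · intro M hM
        refine ih M i (mmin J hJ) ?_
        have := Nat.mul_le_mul_right (2*n) hM
        have h2 : ((mmin J hJ) : ℕ) < (j : ℕ) := hmj
        omega
      · intro M hM
        refine ih M j (mmin J hJ) ?_
        have := Nat.mul_le_mul_right (2*n) hM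
        have h2 : ((mmin J hJ) : ℕ) < (i : ℕ) := hmi
        omega
  · have hij' : i < j := lt_of_le_of_ne hle (fun h => hij (Fin.ext (by omega)))
    by_cases hall : ∀ x ∈ J, i ≤ x
    · have h := comm_low y J hij' hall
      show sig y i (sig y j (bb J)) - sig y j (sig y i (bb J)) = rho y ⁅y i, y j⁆ (bb J)
      rw [show (⁅y i, y j⁆ : L) = -⁅y j, y i⁆ from (lie_skew _ _).symm, map_neg,
        LinearMap.neg_apply, ← h]
      abel
    · push_neg at hall
      obtain ⟨x, hx, hxi⟩ := hall
      have hJ : J ≠ 0 := by rintro rfl; simp at hx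
      have hmi : mmin J hJ < i := lt_of_le_of_lt (mmin_le hJ hx) hxi
      have hmj : mmin J hJ < j := lt_trans hmi hij'
      refine comm_main y J i j hJ hmi hmj harith_low ?_ ?_
      · intro M hM
        refine ih M i (mmin J hJ) ?_
        have := Nat.mul_le_mul_right (2*n) hM
        have h2 : ((mmin J hJ) : ℕ) < (j : ℕ) := hmj
        omega
      · intro M hM
        refine ih M j (mmin J hJ) ?_
        have := Nat.mul_le_mul_right (2*n) hM
        have h2 : ((mmin J hJ) : ℕ) < (i : ℕ) := hmi
        omega

lemma lin_expandW {W : Type} [AddCommGroup W] [Module K W] (F : L →ₗ[K] W) (v : L) :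
    F v = (y.repr v).sum fun k c => c • F (y k) := by
  conv_lhs => rw [← y.linearCombination_repr v]
  rw [Finsupp.linearCombination_apply, map_finsuppSum]
  exact Finsupp.sum_congr fun k _ => map_smul _ _ _

/-- `rho` as a morphism of Lie algebras. -/
noncomputable def rhoLie : L →ₗ⁅K⁆ Module.End K (Pm K n) :=
  { rho y with
    map_lie' := by
      intro u v
      apply LinearMap.ext
      intro f
      rw [Ring.lie_def]
      simp only [LinearMap.sub_apply, Module.End.mul_apply]
      exact (comm_ext y u v f
        (fun M _ => comm_uv y M (fun k l => comm_basis y M k l) u v)).symm }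

/-- The lift of `rho` to the universal enveloping algebra. -/
noncomputable def Phi : UniversalEnvelopingAlgebra K L →ₐ[K] Module.End K (Pm K n) :=
  UniversalEnvelopingAlgebra.lift K (rhoLie y)

lemma Phi_ι (v : L) : Phi y (UniversalEnvelopingAlgebra.ι K v) = rho y v :=
  UniversalEnvelopingAlgebra.lift_ι_apply K _ v

lemma sig_pow (i : Fin n) (c : ℕ) (J : Multiset (Fin n)) (h : ∀ x ∈ J, i ≤ x) :
    ((sig y i)^c) (bb J) = bb (Multiset.replicate c i + J) := by
  induction c with
  | zero => simp only [pow_zero, Module.End.one_apply, Multiset.replicate_zero, zero_add]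
  | succ c ihc =>
    rw [pow_succ', Module.End.mul_apply, ihc]
    have h' : ∀ x ∈ Multiset.replicate c i + J, i ≤ x := by
      intro x hx
      rcases Multiset.mem_add.mp hx with hx | hx
      · rw [Multiset.eq_of_mem_replicate hx]
      · exact h x hx
    rw [sig_pos y h', Multiset.replicate_succ, Multiset.cons_add]

lemma mem_repsum (α : Fin n → ℕ) :
    ∀ (t : List (Fin n)) (x : Fin n),
      x ∈ (t.map fun j => Multiset.replicate (α j) j).sum → ∃ j ∈ t, x = j := by
  intro t
  induction t with
  | nil => intro x hx; simp at hx
  | cons j t iht =>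
    intro x hx
    rw [List.map_cons, List.sum_cons] at hx
    rcases Multiset.mem_add.mp hx with hx | hx
    · exact ⟨j, List.mem_cons_self, Multiset.eq_of_mem_replicate hx⟩
    · obtain ⟨jj, hjj, hh⟩ := iht x hx
      exact ⟨jj, List.mem_cons_of_mem j hjj, hh⟩

lemma prod_sig_apply (α : Fin n → ℕ) :
    ∀ (l : List (Fin n)), l.Pairwise (· < ·) →
      ∀ (J : Multiset (Fin n)), (∀ k ∈ l, ∀ x ∈ J, k ≤ x) →
        ((l.map fun i => (sig y i)^(α i)).prod) (bb J)
          = bb ((l.map fun i => Multiset.replicate (α i) i).sum + J) := by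
  intro l
  induction l with
  | nil =>
    intro _ J _
    simp only [List.map_nil, List.prod_nil, Module.End.one_apply, List.sum_nil, zero_add]
  | cons i t iht =>
    intro hp J hJ
    have hp' := List.pairwise_cons.mp hp
    rw [List.map_cons, List.prod_cons, Module.End.mul_apply,
      iht hp'.2 J (fun k hk x hx => hJ k (List.mem_cons_of_mem i hk) x hx)]
    have hcond : ∀ x ∈ (t.map fun j => Multiset.replicate (α j) j).sum + J, i ≤ x := by
      intro x hx
      rcases Multiset.mem_add.mp hx with hx | hx
      · obtain ⟨jj, hjj, hh⟩ := mem_repsum α t x hx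
        rw [hh]
        exact le_of_lt (hp'.1 jj hjj)
      · exact hJ i (List.mem_cons_self) x hx
    rw [sig_pow y i (α i) _ hcond, List.map_cons, List.sum_cons, add_assoc]

/-- the multiset associated to an exponent vector -/
def toMul (α : Fin n → ℕ) : Multiset (Fin n) :=
  ((List.finRange n).map fun i => Multiset.replicate (α i) i).sum

lemma count_repsum (α : Fin n → ℕ) (i : Fin n) :
    ∀ (t : List (Fin n)), t.Nodup →
      ((t.map fun j => Multiset.replicate (α j) j).sum.count i)
        = if i ∈ t then α i else 0 := by
  intro t
  induction t with
  | nil => intro _; simp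
  | cons j t iht =>
    intro hnd
    rw [List.map_cons, List.sum_cons, Multiset.count_add, iht (List.nodup_cons.mp hnd).2,
      Multiset.count_replicate]
    by_cases hij : i = j
    · subst hij
      have : i ∉ t := (List.nodup_cons.mp hnd).1
      simp [this]
    · by_cases hit : i ∈ t <;> simp [hij, hit, Ne.symm hij, List.mem_cons]

lemma count_toMul (α : Fin n → ℕ) (i : Fin n) : (toMul α).count i = α i := by
  rw [toMul, count_repsum α i (List.finRange n) (List.nodup_finRange n)]
  simp [List.mem_finRange]

lemma toMul_injective : Function.Injective (toMul (n := n)) := by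
  intro α β h
  funext i
  rw [← count_toMul α i, ← count_toMul β i, h]

lemma Phi_monomial (α : Fin n → ℕ) :
    Phi y (((List.finRange n).map
      (fun i => (UniversalEnvelopingAlgebra.ι K (y i) : UniversalEnvelopingAlgebra K L) ^ α i)).prod)
      (bb 0) = bb (toMul α) := by
  rw [map_list_prod, List.map_map]
  have hmap : (List.finRange n).map
        (⇑(Phi y) ∘ fun i => (UniversalEnvelopingAlgebra.ι K (y i) :
            UniversalEnvelopingAlgebra K L) ^ α i)
      = (List.finRange n).map (fun i => (sig y i)^(α i)) := by
    refine List.map_congr_left (fun i _ => ?_)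
    simp only [Function.comp_apply, map_pow, Phi_ι, rho_basis]
  rw [hmap, prod_sig_apply y α (List.finRange n) (List.pairwise_lt_finRange n) 0
    (by intro k _ x hx; simp at hx), add_zero]
  rfl

theorem pbw_indep : LinearIndependent K
    (fun α : Fin n → ℕ =>
      ((List.finRange n).map
        (fun i => (UniversalEnvelopingAlgebra.ι K (y i) :
            UniversalEnvelopingAlgebra K L) ^ α i)).prod) := by
  let T : UniversalEnvelopingAlgebra K L →ₗ[K] Pm K n :=
    { toFun := fun u => Phi y u (bb 0)
      map_add' := fun a b => by simp only [map_add, LinearMap.add_apply]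
      map_smul' := fun c a => by
        simp only [map_smul, LinearMap.smul_apply, RingHom.id_apply] }
  refine LinearIndependent.of_comp T ?_
  have hcomp : (⇑T ∘ fun α : Fin n → ℕ =>
      ((List.finRange n).map
        (fun i => (UniversalEnvelopingAlgebra.ι K (y i) :
            UniversalEnvelopingAlgebra K L) ^ α i)).prod)
      = (⇑(Finsupp.basisSingleOne (R := K) (ι := Multiset (Fin n)))) ∘ toMul := by
    funext α
    simp only [Function.comp_apply, Finsupp.coe_basisSingleOne]
    exact Phi_monomial y α
  rw [hcomp]
  exact (Finsupp.basisSingleOne.linearIndependent).comp toMul toMul_injective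

/-! ### The spanning half -/

/-- a standard monomial in the universal enveloping algebra -/
noncomputable def mono (α : Fin n → ℕ) : UniversalEnvelopingAlgebra K L :=
  ((List.finRange n).map
    (fun i => (UniversalEnvelopingAlgebra.ι K (y i) : UniversalEnvelopingAlgebra K L) ^ α i)).prod

/-- degree of an exponent vector -/
def deg (α : Fin n → ℕ) : ℕ := ∑ i, α i

/-- span of standard monomials of degree at most `d` -/
noncomputable def Md (d : ℕ) : Submodule K (UniversalEnvelopingAlgebra K L) :=
  Submodule.span K ((fun α => mono y α) '' {α | deg α ≤ d})

lemma mono_mem {α : Fin n → ℕ} {d : ℕ} (h : deg α ≤ d) : mono y α ∈ Md y d :=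
  Submodule.subset_span ⟨α, h, rfl⟩

lemma Md_mono {d d' : ℕ} (h : d ≤ d') : Md y d ≤ Md y d' :=
  Submodule.span_mono (Set.image_mono fun α hα => le_trans hα h)

lemma Md_le_span (d : ℕ) :
    Md y d ≤ Submodule.span K (Set.range (fun α => mono y α)) :=
  Submodule.span_mono (by rintro _ ⟨α, _, rfl⟩; exact ⟨α, rfl⟩)

lemma mem_take_lt {i j : Fin n} (hj : j ∈ (List.finRange n).take i.val) : j < i := by
  obtain ⟨k, hk, hkj⟩ := List.mem_iff_getElem.mp hj
  rw [List.getElem_take, List.getElem_finRange] at hkj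
  have hki : k < i.val := by
    rw [List.length_take, List.length_finRange] at hk
    omega
  rw [← hkj]
  exact hki

lemma mem_drop_gt {i j : Fin n} (hj : j ∈ (List.finRange n).drop (i.val + 1)) : i < j := by
  obtain ⟨k, hk, hkj⟩ := List.mem_iff_getElem.mp hj
  rw [List.getElem_drop, List.getElem_finRange] at hkj
  rw [← hkj]
  simp only [Fin.lt_def, Fin.coe_cast]
  omega

lemma mono_split (α : Fin n → ℕ) (i : Fin n) (h : ∀ j, j < i → α j = 0) :
    mono y α = (UniversalEnvelopingAlgebra.ι K (y i) : UniversalEnvelopingAlgebra K L) ^ (α i)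
      * (((List.finRange n).drop (i.val + 1)).map
          (fun j => (UniversalEnvelopingAlgebra.ι K (y j) :
              UniversalEnvelopingAlgebra K L) ^ α j)).prod := by
  have hdrop : (List.finRange n).drop i.val = i :: (List.finRange n).drop (i.val + 1) := by
    rw [List.drop_eq_getElem_cons (by simpa using i.isLt)]
    congr 1
    rw [List.getElem_finRange]
    exact Fin.ext (by simp)
  have hsplit : List.finRange n
      = (List.finRange n).take i.val ++ i :: (List.finRange n).drop (i.val + 1) := by
    rw [← hdrop, List.take_append_drop]
  rw [mono]
  conv_lhs => rw [hsplit]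
  rw [List.map_append, List.prod_append, List.map_cons, List.prod_cons]
  have h1 : (((List.finRange n).take i.val).map
      (fun j => (UniversalEnvelopingAlgebra.ι K (y j) :
          UniversalEnvelopingAlgebra K L) ^ α j)).prod = 1 := by
    refine List.prod_eq_one ?_
    intro z hz
    rw [List.mem_map] at hz
    obtain ⟨j, hj, rfl⟩ := hz
    rw [h j (mem_take_lt hj), pow_zero]
  rw [h1, one_mul]

lemma pull (α : Fin n → ℕ) (i : Fin n) (h : ∀ j, j < i → α j = 0) :
    (UniversalEnvelopingAlgebra.ι K (y i) : UniversalEnvelopingAlgebra K L) * mono y α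
      = mono y (Function.update α i (α i + 1)) := by
  have h' : ∀ j, j < i → Function.update α i (α i + 1) j = 0 := by
    intro j hj
    rw [Function.update_of_ne (ne_of_lt hj)]
    exact h j hj
  rw [mono_split y α i h, mono_split y _ i h', Function.update_self]
  have hrest : (((List.finRange n).drop (i.val + 1)).map
        (fun j => (UniversalEnvelopingAlgebra.ι K (y j) :
            UniversalEnvelopingAlgebra K L) ^ Function.update α i (α i + 1) j))
      = (((List.finRange n).drop (i.val + 1)).map
        (fun j => (UniversalEnvelopingAlgebra.ι K (y j) :
            UniversalEnvelopingAlgebra K L) ^ α j)) := by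
    refine List.map_congr_left (fun j hj => ?_)
    rw [Function.update_of_ne (ne_of_gt (mem_drop_gt hj))]
  rw [hrest, pow_succ', mul_assoc]

lemma deg_update_add (α : Fin n → ℕ) (i : Fin n) :
    deg (Function.update α i (α i + 1)) = deg α + 1 := by
  rw [deg, deg, Finset.sum_update_of_mem (Finset.mem_univ i),
    Finset.sum_eq_sum_sdiff_singleton_add (Finset.mem_univ i) α]
  omega

lemma deg_update_sub (α : Fin n → ℕ) (i : Fin n) (h : α i ≠ 0) :
    deg (Function.update α i (α i - 1)) = deg α - 1 := by
  rw [deg, deg, Finset.sum_update_of_mem (Finset.mem_univ i),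
    Finset.sum_eq_sum_sdiff_singleton_add (Finset.mem_univ i) α]
  omega

lemma deg_pos {α : Fin n → ℕ} {i : Fin n} (h : α i ≠ 0) : 1 ≤ deg α := by
  have := Finset.single_le_sum (f := α) (fun j _ => Nat.zero_le _) (Finset.mem_univ i)
  rw [deg]
  omega

lemma straighten : ∀ (d : ℕ) (i : Fin n), ∀ x ∈ Md y d,
    (UniversalEnvelopingAlgebra.ι K (y i) : UniversalEnvelopingAlgebra K L) * x
      ∈ Md y (d+1) := by
  refine measure_ind
    (C := fun d i => ∀ x ∈ Md y d,
      (UniversalEnvelopingAlgebra.ι K (y i) : UniversalEnvelopingAlgebra K L) * x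
        ∈ Md y (d+1))
    (fun d i ih => ?_)
  intro x hx
  induction hx using Submodule.span_induction with
  | mem x hmem =>
    obtain ⟨α, hα, rfl⟩ := hmem
    have hαd : deg α ≤ d := hα
    by_cases hall : ∀ j, j < i → α j = 0
    · rw [pull y α i hall]
      exact mono_mem y (by rw [deg_update_add]; omega)
    · push_neg at hall
      obtain ⟨j, hji, hj0⟩ := hall
      have hdα : 1 ≤ deg α := deg_pos hj0
      obtain ⟨e, rfl⟩ : ∃ e, d = e + 1 := ⟨d - 1, by omega⟩
      set Sf := Finset.univ.filter (fun k => α k ≠ 0) with hSf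
      have hne : Sf.Nonempty := ⟨j, by simp [hSf, hj0]⟩
      set j₀ := Sf.min' hne with hj₀def
      have hj₀0 : α j₀ ≠ 0 := by
        have := Sf.min'_mem hne
        simp only [hSf, Finset.mem_filter, Finset.mem_univ, true_and] at this
        exact this
      have hj₀i : j₀ < i :=
        lt_of_le_of_lt (Sf.min'_le j (by simp [hSf, hj0])) hji
      have hall' : ∀ k, k < j₀ → α k = 0 := by
        intro k hk
        by_contra h0
        exact absurd (Sf.min'_le k (by simp [hSf, h0])) (not_le.mpr hk)
      set β := Function.update α j₀ (α j₀ - 1) with hβ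
      have hβall : ∀ k, k < j₀ → β k = 0 := by
        intro k hk
        rw [hβ, Function.update_of_ne (ne_of_lt hk)]
        exact hall' k hk
      have hαβ : Function.update β j₀ (β j₀ + 1) = α := by
        funext k
        by_cases hk : k = j₀
        · subst hk
          rw [Function.update_self, hβ, Function.update_self]
          omega
        · rw [Function.update_of_ne hk, hβ, Function.update_of_ne hk]
      have hpull : (UniversalEnvelopingAlgebra.ι K (y j₀) :
          UniversalEnvelopingAlgebra K L) * mono y β = mono y α := by
        rw [pull y β j₀ hβall, hαβ]
      have hdegβ : deg β ≤ e := by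
        have := deg_update_sub α j₀ hj₀0
        rw [← hβ] at this
        omega
      have hcomm : (UniversalEnvelopingAlgebra.ι K (y i) : UniversalEnvelopingAlgebra K L)
            * UniversalEnvelopingAlgebra.ι K (y j₀)
          = UniversalEnvelopingAlgebra.ι K (y j₀) * UniversalEnvelopingAlgebra.ι K (y i)
            + UniversalEnvelopingAlgebra.ι K ⁅y i, y j₀⁆ := by
        rw [LieHom.map_lie, Ring.lie_def]
        abel
      have hterm1 : (UniversalEnvelopingAlgebra.ι K (y j₀) : UniversalEnvelopingAlgebra K L)
          * ((UniversalEnvelopingAlgebra.ι K (y i) : UniversalEnvelopingAlgebra K L)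
            * mono y β) ∈ Md y (e+1+1) := by
        refine ih (e+1) j₀ (Nat.add_lt_add_left hj₀i _) _ ?_
        exact ih e i (lt_measure_left (Nat.lt_succ_self e) i i) _ (mono_mem y hdegβ)
      have hterm2 : (UniversalEnvelopingAlgebra.ι K ⁅y i, y j₀⁆ :
          UniversalEnvelopingAlgebra K L) * mono y β ∈ Md y (e+1+1) := by
        have hexp := lin_expandW y
          ((UniversalEnvelopingAlgebra.ι K : L →ₗ⁅K⁆ UniversalEnvelopingAlgebra K L) :
            L →ₗ[K] UniversalEnvelopingAlgebra K L) ⁅y i, y j₀⁆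
        simp only [LieHom.coe_toLinearMap] at hexp
        rw [hexp, Finsupp.sum_mul]
        refine Submodule.sum_mem _ (fun k _ => ?_)
        simp only [smul_mul_assoc]
        refine Submodule.smul_mem _ _ ?_
        exact Md_mono y (Nat.le_succ _)
          (ih e k (lt_measure_left (Nat.lt_succ_self e) i k) _ (mono_mem y hdegβ))
      have heq : (UniversalEnvelopingAlgebra.ι K (y i) : UniversalEnvelopingAlgebra K L)
            * mono y α
          = (UniversalEnvelopingAlgebra.ι K (y j₀) : UniversalEnvelopingAlgebra K L)
            * ((UniversalEnvelopingAlgebra.ι K (y i) : UniversalEnvelopingAlgebra K L)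
              * mono y β)
            + (UniversalEnvelopingAlgebra.ι K ⁅y i, y j₀⁆ :
              UniversalEnvelopingAlgebra K L) * mono y β := by
        rw [← hpull, ← mul_assoc, hcomm, add_mul, mul_assoc]
      rw [heq]
      exact Submodule.add_mem _ hterm1 hterm2
  | zero =>
    rw [mul_zero]
    exact Submodule.zero_mem _
  | add a b _ _ iha ihb =>
    rw [mul_add]
    exact Submodule.add_mem _ iha ihb
  | smul c a _ iha =>
    rw [mul_smul_comm]
    exact Submodule.smul_mem _ _ iha

lemma mul_gen_span (i : Fin n) (x : UniversalEnvelopingAlgebra K L)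
    (hx : x ∈ Submodule.span K (Set.range (fun α => mono y α))) :
    (UniversalEnvelopingAlgebra.ι K (y i) : UniversalEnvelopingAlgebra K L) * x
      ∈ Submodule.span K (Set.range (fun α => mono y α)) := by
  induction hx using Submodule.span_induction with
  | mem x hmem =>
    obtain ⟨α, rfl⟩ := hmem
    exact Md_le_span y _ (straighten y (deg α) i _ (mono_mem y le_rfl))
  | zero => rw [mul_zero]; exact Submodule.zero_mem _
  | add a b _ _ iha ihb => rw [mul_add]; exact Submodule.add_mem _ iha ihb
  | smul c a _ iha => rw [mul_smul_comm]; exact Submodule.smul_mem _ _ iha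

theorem pbw_span :
    Submodule.span K (Set.range (fun α : Fin n → ℕ => mono y α)) = ⊤ := by
  rw [eq_top_iff]
  rintro u -
  have h1mem : (1 : UniversalEnvelopingAlgebra K L)
      ∈ Submodule.span K (Set.range (fun α => mono y α)) := by
    have hone : mono y (fun _ => 0) = 1 := by
      refine List.prod_eq_one ?_
      intro z hz
      rw [List.mem_map] at hz
      obtain ⟨i, _, rfl⟩ := hz
      exact pow_zero _
    rw [← hone]
    exact Submodule.subset_span ⟨fun _ => 0, rfl⟩
  have hι : ∀ (v : L) (x : UniversalEnvelopingAlgebra K L),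
      x ∈ Submodule.span K (Set.range (fun α => mono y α)) →
      (UniversalEnvelopingAlgebra.ι K v : UniversalEnvelopingAlgebra K L) * x
        ∈ Submodule.span K (Set.range (fun α => mono y α)) := by
    intro v x hx
    have hexp := lin_expandW y
      ((UniversalEnvelopingAlgebra.ι K : L →ₗ⁅K⁆ UniversalEnvelopingAlgebra K L) :
        L →ₗ[K] UniversalEnvelopingAlgebra K L) v
    simp only [LieHom.coe_toLinearMap] at hexp
    rw [hexp, Finsupp.sum_mul]
    refine Submodule.sum_mem _ (fun k _ => ?_)
    simp only [smul_mul_assoc]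
    exact Submodule.smul_mem _ _ (mul_gen_span y k x hx)
  have hsurj : Function.Surjective ⇑(UniversalEnvelopingAlgebra.mkAlgHom K L) :=
    by unfold UniversalEnvelopingAlgebra.mkAlgHom; exact RingCon.mkₐ_surjective _
  obtain ⟨t, rfl⟩ := hsurj u
  have key : ∀ (t : TensorAlgebra K L),
      ∀ x ∈ Submodule.span K (Set.range (fun α => mono y α)),
      (UniversalEnvelopingAlgebra.mkAlgHom K L) t * x
        ∈ Submodule.span K (Set.range (fun α => mono y α)) := by
    intro t
    induction t using TensorAlgebra.induction with
    | algebraMap r =>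
      intro x hx
      rw [AlgHom.commutes, ← Algebra.smul_def]
      exact Submodule.smul_mem _ _ hx
    | ι v =>
      intro x hx
      rw [← UniversalEnvelopingAlgebra.ι_apply]
      exact hι v x hx
    | mul a b iha ihb =>
      intro x hx
      rw [map_mul, mul_assoc]
      exact iha _ (ihb x hx)
    | add a b iha ihb =>
      intro x hx
      rw [map_add, add_mul]
      exact Submodule.add_mem _ (iha x hx) (ihb x hx)
  have := key t 1 h1mem
  rwa [mul_one] at this

end PBWaux



/-- **The Poincaré–Birkhoff–Witt theorem.**  If `K` is a field and `𝒢` a finite-dimensional Lie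
algebra over `K` with `K`-basis `y₁,…,yₙ`, then the standard monomials
`ι(y₁)^{α₁} ⋯ ι(yₙ)^{αₙ}`, `α ∈ ℕⁿ`, form a `K`-basis of the universal enveloping algebra
`𝒰(𝒢)`. -/
theorem poincare_birkhoff_witt (K : Type) [Field K] (L : Type) [LieRing L] [LieAlgebra K L]
    {n : ℕ} (y : Module.Basis (Fin n) K L) :
    LinearIndependent K
      (fun α : Fin n → ℕ =>
        ((List.finRange n).map
          (fun i => (UniversalEnvelopingAlgebra.ι K (y i) :
              UniversalEnvelopingAlgebra K L) ^ α i)).prod) ∧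
    Submodule.span K
      (Set.range (fun α : Fin n → ℕ =>
        ((List.finRange n).map
          (fun i => (UniversalEnvelopingAlgebra.ι K (y i) :
              UniversalEnvelopingAlgebra K L) ^ α i)).prod)) = ⊤ :=
  ⟨PBWaux.pbw_indep y, PBWaux.pbw_span y⟩
end

section
/- Let K be a field and 𝒢 a finite-dimensional Lie algebra over K with basis y₁,…,yₙ and structure constants a_{ij}^{(k)} ∈ K defined by [x_j, x_i] = a_{ij}^{(1)} x₁ + ⋯ + a_{ij}^{(n)} xₙ for i < j (identifying the variable xₗ with the basis element yₗ). Take the reduction data over the ring K given by σᵢ := id_K, δᵢ := 0, c_{ij} := 1, d_{ij} := 0, and the a_{ij}^{(k)} above, with associated functions p and h. Then conditions (2) and (3) of the existence theorem hold: h(x_j xᵢ r) = h(p(x_j xᵢ) r) for all i < j and r ∈ K, and h(x_k x_j xᵢ) = h(p(x_k x_j) xᵢ) for all i < j < k (the latter being a consequence of the Jacobi identity). -/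
/-! ## The reduction machinery -/

/-- A letter is either a variable `xᵢ` (`Sum.inl i`) or an element of `R` (`Sum.inr r`). -/
abbrev Ltr (R : Type) (n : ℕ) := Sum (Fin n) R

/-- `W` is the free monoid on the alphabet `X ∪ R`. -/
abbrev W (R : Type) (n : ℕ) := FreeMonoid (Ltr R n)

/-- The free `ℤ`-algebra `ℤ⟨X ∪ R⟩` on the alphabet `X ∪ R`. -/
abbrev FreeAlg (R : Type) (n : ℕ) := MonoidAlgebra ℤ (W R n)

variable {R : Type} [Ring R] {n : ℕ}

/-- The letter `xᵢ` as a word. -/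
def xLtr (i : Fin n) : W R n := FreeMonoid.of (Sum.inl i)

/-- The letter `r ∈ R` as a word. -/
def rLtr (r : R) : W R n := FreeMonoid.of (Sum.inr r)

/-- A word of `W`, viewed inside `ℤ⟨X ∪ R⟩`. -/
noncomputable def wd (w : W R n) : FreeAlg R n := MonoidAlgebra.of ℤ (W R n) w

/-- The number of inversions of a word involving only `x`'s. -/
def invX : List (Ltr R n) → ℕ
  | [] => 0
  | (Sum.inl j) :: rest =>
      (rest.countP (fun l => match l with | Sum.inl i => decide (i < j) | _ => false)) + invX rest
  | (Sum.inr _) :: rest => invX rest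

/-- The number of inversions of a word of the type `(xᵢ, r)`. -/
def invXR : List (Ltr R n) → ℕ
  | [] => 0
  | (Sum.inl _) :: rest =>
      (rest.countP (fun l => match l with | Sum.inr _ => true | _ => false)) + invXR rest
  | (Sum.inr _) :: rest => invXR rest

/-- `T` is the set of words with complexity `(a, 0, 0)`. -/
def MemT (w : W R n) : Prop := invX (FreeMonoid.toList w) = 0 ∧ invXR (FreeMonoid.toList w) = 0

/-- The list of `X`-letters of a word, in order. -/
def xPart (w : W R n) : List (Fin n) :=
  (FreeMonoid.toList w).filterMap (fun l => match l with | Sum.inl i => some i | _ => none)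

/-- The ordered product of the `R`-letters of a word. -/
def rPart (w : W R n) : R :=
  ((FreeMonoid.toList w).filterMap (fun l => match l with | Sum.inr r => some r | _ => none)).prod

/-- `Mon` is the set of standard monomials `x_{i₁} ⋯ x_{i_m}`, `i₁ ≤ ⋯ ≤ i_m`. -/
def Mon (n : ℕ) := {l : List (Fin n) // l.Pairwise (· ≤ ·)}

/-- `F_R(Mon)`, the free left `R`-module with basis `Mon`. -/
abbrev FRMon (R : Type) [Ring R] (n : ℕ) := Mon n →₀ R

open scoped Classical in
/-- The value of `q` on a word: `q(r₁ ⋯ r_m x_{i₁} ⋯ x_{i_k}) = (r₁ ⋯ r_m) • x_{i₁} ⋯ x_{i_k}`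
(for words in `T`; the value on other words is irrelevant). -/
noncomputable def qWord (w : W R n) : FRMon R n :=
  if h : (xPart w).Pairwise (· ≤ ·) then Finsupp.single ⟨xPart w, h⟩ (rPart w) else 0

/-- `t : F_R(Mon) → ℤ⟨X ∪ R⟩`, sending `Σ r_x̄ • x̄` to `Σ (r_x̄ x̄)` (the word consisting of the
`R`-letter `r_x̄` followed by the monomial `x̄`). -/
noncomputable def tmap (f : FRMon R n) : FreeAlg R n :=
  f.sum (fun m r => wd (FreeMonoid.ofList (Sum.inr r :: m.val.map Sum.inl)))

/-- The defining recursion (by induction on complexity) of the reduction map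
`p : W → ℤ⟨X ∪ R⟩` associated with the data `σᵢ, δᵢ, c_{ij}, d_{ij}, a_{ij}^{(k)}`. -/
structure IsReduction (σ δ : Fin n → R → R) (c d : Fin n → Fin n → R)
    (a : Fin n → Fin n → Fin n → R) (P : W R n → FreeAlg R n) : Prop where
  of_memT : ∀ w : W R n, MemT w → P w = wd w
  xr : ∀ (v₁ v₂ : W R n) (i : Fin n) (r : R), MemT (rLtr r * v₂) →
    P (v₁ * xLtr i * rLtr r * v₂) =
      P (v₁ * rLtr (σ i r) * xLtr i * v₂) + P (v₁ * rLtr (δ i r) * v₂)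
  xx : ∀ (v₁ v₂ : W R n) (i j : Fin n), i < j → MemT (xLtr i * v₂) →
    P (v₁ * xLtr j * xLtr i * v₂) =
      P (v₁ * rLtr (c i j) * xLtr i * xLtr j * v₂) +
      (∑ k, P (v₁ * rLtr (a i j k) * xLtr k * v₂)) + P (v₁ * rLtr (d i j) * v₂)

/-- Condition (1): each `σᵢ` is a ring endomorphism of `R` and each `δᵢ` is a
`σᵢ`-derivation. -/
def Cond1 (σ δ : Fin n → R → R) : Prop :=
  ∀ i : Fin n, σ i 1 = 1 ∧ (∀ r s, σ i (r + s) = σ i r + σ i s) ∧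
    (∀ r s, σ i (r * s) = σ i r * σ i s) ∧
    (∀ r s, δ i (r + s) = δ i r + δ i s) ∧
    (∀ r s, δ i (r * s) = σ i r * δ i s + δ i r * s)

set_option linter.unusedSectionVars false
/-! ## Infrastructure -/

section Infra

open Finsupp

variable {K : Type} [Field K] {n : ℕ}

/-- Words consisting only of `R`-letters. -/
def RWord (v : W K n) : Prop := ∀ l ∈ FreeMonoid.toList v, Sum.isRight l

lemma rword_one : RWord (1 : W K n) := by
  intro l hl; simp [FreeMonoid.toList_one] at hl

lemma rword_rLtr (r : K) : RWord (rLtr r : W K n) := by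
  intro l hl
  simp only [rLtr, FreeMonoid.toList_of, List.mem_singleton] at hl
  subst hl; rfl

lemma rword_mul {u v : W K n} (hu : RWord u) (hv : RWord v) : RWord (u * v) := by
  intro l hl
  rw [FreeMonoid.toList_mul] at hl
  rcases List.mem_append.1 hl with h | h
  · exact hu _ h
  · exact hv _ h

lemma invX_append {l₁ l₂ : List (Ltr K n)} (h : ∀ x ∈ l₁, Sum.isRight x) :
    invX (l₁ ++ l₂) = invX l₂ := by
  induction l₁ with
  | nil => rfl
  | cons hd tl ih =>
    cases hd with
    | inl i => simpa using h _ List.mem_cons_self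
    | inr r =>
      simp only [List.cons_append, invX]
      exact ih fun x hx => h x (List.mem_cons_of_mem _ hx)

lemma invXR_append {l₁ l₂ : List (Ltr K n)} (h : ∀ x ∈ l₁, Sum.isRight x) :
    invXR (l₁ ++ l₂) = invXR l₂ := by
  induction l₁ with
  | nil => rfl
  | cons hd tl ih =>
    cases hd with
    | inl i => simpa using h _ List.mem_cons_self
    | inr r =>
      simp only [List.cons_append, invXR]
      exact ih fun x hx => h x (List.mem_cons_of_mem _ hx)

lemma memT_rw_mul {v w : W K n} (hv : RWord v) : MemT (v * w) ↔ MemT w := by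
  unfold MemT
  rw [FreeMonoid.toList_mul, invX_append hv, invXR_append hv]

lemma xPart_rw_mul {v w : W K n} (hv : RWord v) : xPart (v * w) = xPart w := by
  unfold xPart
  rw [FreeMonoid.toList_mul, List.filterMap_append, List.filterMap_eq_nil_iff.2, List.nil_append]
  intro l hl
  rcases l with i | r
  · exact absurd (hv _ hl) (by simp)
  · rfl

lemma rPart_mul (v w : W K n) : rPart (v * w) = rPart v * rPart w := by
  unfold rPart
  rw [FreeMonoid.toList_mul, List.filterMap_append, List.prod_append]

lemma rPart_rLtr (r : K) : rPart (rLtr r : W K n) = r := by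
  show ([r].prod : K) = r
  simp

lemma rPart_one : rPart (1 : W K n) = 1 := rfl

lemma qWord_rw_mul {v w : W K n} (hv : RWord v) :
    qWord (v * w) = rPart v • qWord w := by
  classical
  unfold qWord
  rw [xPart_rw_mul hv, rPart_mul]
  split
  · exact (Finsupp.smul_single (rPart v) _ (rPart w)).symm
  · rw [smul_zero]

lemma memT_one : MemT (1 : W K n) := ⟨rfl, rfl⟩

lemma memT_x1 (i : Fin n) : MemT (xLtr i : W K n) := ⟨rfl, rfl⟩

lemma memT_r (r : K) : MemT (rLtr r : W K n) := ⟨rfl, rfl⟩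

lemma memT_x2 {i j : Fin n} (h : i ≤ j) : MemT (xLtr i * xLtr j : W K n) := by
  constructor
  · show invX [Sum.inl i, Sum.inl j] = 0
    simp [invX, List.countP_cons, not_lt.2 h]
  · rfl

lemma memT_x3 {i j k : Fin n} (h1 : i ≤ j) (h2 : j ≤ k) :
    MemT (xLtr i * (xLtr j * xLtr k) : W K n) := by
  constructor
  · show invX [Sum.inl i, Sum.inl j, Sum.inl k] = 0
    simp [invX, List.countP_cons, not_lt.2 h1, not_lt.2 h2, not_lt.2 (h1.trans h2)]
  · rfl

lemma memT_tail {p : Fin n} {w : W K n} (h : MemT (xLtr p * w)) : MemT w := by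
  obtain ⟨h1, h2⟩ := h
  rw [show FreeMonoid.toList (xLtr p * w) = Sum.inl p :: FreeMonoid.toList w from rfl] at h1 h2
  simp only [invX] at h1
  simp only [invXR] at h2
  exact ⟨by omega, by omega⟩

/-- standard monomials -/
def mon0 : Mon n := ⟨[], List.Pairwise.nil⟩

def mon1 (i : Fin n) : Mon n := ⟨[i], List.pairwise_singleton _ i⟩

def mon2 (i j : Fin n) (h : i ≤ j) : Mon n := ⟨[i, j], by simp [List.pairwise_cons, h]⟩

def mon3 (i j k : Fin n) (h1 : i ≤ j) (h2 : j ≤ k) : Mon n :=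
  ⟨[i, j, k], by simp [List.pairwise_cons, h1, h2, h1.trans h2]⟩

lemma qWord_of_sorted (w : W K n) (h : (xPart w).Pairwise (· ≤ ·)) :
    qWord w = Finsupp.single ⟨xPart w, h⟩ (rPart w) := by
  unfold qWord
  exact dif_pos h

lemma qWord_one : qWord (1 : W K n) = Finsupp.single (mon0 : Mon n) 1 := by
  rw [qWord_of_sorted (1 : W K n)
    (show (([] : List (Fin n))).Pairwise (· ≤ ·) from List.Pairwise.nil)]
  rfl

lemma qWord_x1 (i : Fin n) : qWord (xLtr i : W K n) = Finsupp.single (mon1 i) 1 := by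
  rw [qWord_of_sorted (xLtr i : W K n)
    (show (([i] : List (Fin n))).Pairwise (· ≤ ·) from List.pairwise_singleton _ i)]
  rfl

lemma qWord_x2 {i j : Fin n} (h : i ≤ j) :
    qWord (xLtr i * xLtr j : W K n) = Finsupp.single (mon2 i j h) 1 := by
  have hs : (xPart (xLtr i * xLtr j : W K n)).Pairwise (· ≤ ·) := by
    show (([i, j]) : List (Fin n)).Pairwise (· ≤ ·)
    simp [List.pairwise_cons, h]
  rw [qWord_of_sorted _ hs]
  rfl

lemma qWord_x3 {i j k : Fin n} (h1 : i ≤ j) (h2 : j ≤ k) :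
    qWord (xLtr i * (xLtr j * xLtr k) : W K n) = Finsupp.single (mon3 i j k h1 h2) 1 := by
  have hs : (xPart (xLtr i * (xLtr j * xLtr k) : W K n)).Pairwise (· ≤ ·) := by
    show (([i, j, k]) : List (Fin n)).Pairwise (· ≤ ·)
    simp [List.pairwise_cons, h1, h2, h1.trans h2]
  rw [qWord_of_sorted _ hs]
  rfl

lemma wd_mul (u v : W K n) : wd u * wd v = wd (u * v) :=
  ((MonoidAlgebra.of ℤ (W K n)).map_mul u v).symm

/-- sum of bracket coefficients as an element of `FRMon` -/
noncomputable def brSum (a : Fin n → Fin n → Fin n → K) (p q : Fin n) : FRMon K n :=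
  ∑ m, Finsupp.single (mon1 m) (a p q m)

/-- normal form of a product of two variables -/
noncomputable def E2 (a : Fin n → Fin n → Fin n → K) (p q : Fin n) : FRMon K n :=
  if h : p ≤ q then Finsupp.single (mon2 p q h) 1
  else Finsupp.single (mon2 q p (le_of_not_ge h)) 1 + brSum a q p

lemma E2_le {a : Fin n → Fin n → Fin n → K} {p q : Fin n} (h : p ≤ q) :
    E2 a p q = Finsupp.single (mon2 p q h) 1 := by
  unfold E2; rw [dif_pos h]

lemma E2_gt {a : Fin n → Fin n → Fin n → K} {p q : Fin n} (h : q < p) :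
    E2 a p q = Finsupp.single (mon2 q p h.le) 1 + brSum a q p := by
  unfold E2; rw [dif_neg (not_le.2 h)]

end Infra

section LieInfra

variable {K : Type} [Field K] {L : Type} [LieRing L] [LieAlgebra K L] {n : ℕ}

/-- the embedding of `L` into `FRMon` via a basis -/
noncomputable def phi (y : Module.Basis (Fin n) K L) : L →ₗ[K] FRMon K n :=
  (Finsupp.lmapDomain K K (mon1 : Fin n → Mon n)) ∘ₗ (y.repr : L →ₗ[K] (Fin n →₀ K))

lemma phi_apply_y (y : Module.Basis (Fin n) K L) (m : Fin n) :
    phi y (y m) = Finsupp.single (mon1 m) 1 := by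
  simp [phi, Finsupp.lmapDomain_apply, Module.Basis.repr_self, Finsupp.mapDomain_single]

variable (y : Module.Basis (Fin n) K L) (a : Fin n → Fin n → Fin n → K)

lemma brSum_eq_phi (ha : ∀ i j : Fin n, i < j → ⁅y j, y i⁆ = ∑ k, a i j k • y k)
    {p q : Fin n} (h : p < q) : brSum a p q = phi y ⁅y q, y p⁆ := by
  rw [ha p q h, map_sum]
  simp only [map_smul, phi_apply_y, Finsupp.smul_single, smul_eq_mul, mul_one]
  rfl

lemma E2_swap (ha : ∀ i j : Fin n, i < j → ⁅y j, y i⁆ = ∑ k, a i j k • y k)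
    (p q : Fin n) : E2 a p q = E2 a q p + phi y ⁅y p, y q⁆ := by
  rcases lt_trichotomy p q with h | rfl | h
  · rw [E2, dif_pos h.le, E2, dif_neg (not_le.2 h), brSum_eq_phi y a ha h,
      ← lie_skew (y p) (y q), map_neg]
    abel
  · simp [E2]
  · rw [E2, dif_neg (not_le.2 h), E2, dif_pos h.le, brSum_eq_phi y a ha h]

lemma final_identity (ha : ∀ i j : Fin n, i < j → ⁅y j, y i⁆ = ∑ k, a i j k • y k)
    {i j k : Fin n} (hij : i < j) (hjk : j < k) :
    (∑ m, a j k m • E2 a i m) + (∑ m, a i k m • E2 a m j) + (∑ m, a i j m • E2 a k m)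
      = (∑ m, a i j m • E2 a m k) + (∑ m, a i k m • E2 a j m)
          + (∑ m, a j k m • E2 a m i) := by
  have hik : i < k := hij.trans hjk
  have lsum : ∀ (x : L) (c : Fin n → K),
      phi y ⁅x, ∑ m, c m • y m⁆ = ∑ m, c m • phi y ⁅x, y m⁆ := by
    intro x c
    rw [show ⁅x, ∑ m, c m • y m⁆ = (LieAlgebra.ad K L x) (∑ m, c m • y m) from rfl, map_sum]
    simp [LieAlgebra.ad_apply, lie_smul]
  have e1 : ∑ m, a j k m • phi y ⁅y i, y m⁆ = phi y ⁅y i, ⁅y k, y j⁆⁆ := by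
    rw [ha j k hjk, lsum]
  have e2 : ∑ m, a i k m • phi y ⁅y m, y j⁆ = - phi y ⁅y j, ⁅y k, y i⁆⁆ := by
    calc ∑ m, a i k m • phi y ⁅y m, y j⁆
        = ∑ m, -(a i k m • phi y ⁅y j, y m⁆) := by
          refine Finset.sum_congr rfl fun m _ => ?_
          have hsk := lie_skew (x := y m) (y := y j)
          rw [← hsk, map_neg, smul_neg]
      _ = - ∑ m, a i k m • phi y ⁅y j, y m⁆ := by rw [Finset.sum_neg_distrib]
      _ = - phi y ⁅y j, ⁅y k, y i⁆⁆ := by rw [ha i k hik, lsum]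
  have e3 : ∑ m, a i j m • phi y ⁅y k, y m⁆ = phi y ⁅y k, ⁅y j, y i⁆⁆ := by
    rw [ha i j hij, lsum]
  have jac : ⁅y i, ⁅y k, y j⁆⁆ + -⁅y j, ⁅y k, y i⁆⁆ + ⁅y k, ⁅y j, y i⁆⁆ = (0 : L) := by
    rw [leibniz_lie (y k) (y j) (y i)]
    rw [← lie_skew (x := ⁅y k, y j⁆) (y := y i)]
    abel
  have zero : (∑ m, a j k m • phi y ⁅y i, y m⁆) + (∑ m, a i k m • phi y ⁅y m, y j⁆)
      + (∑ m, a i j m • phi y ⁅y k, y m⁆) = 0 := by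
    rw [e1, e2, e3, ← map_neg, ← map_add, ← map_add, jac, map_zero]
  have g1 : ∀ m, E2 a i m = E2 a m i + phi y ⁅y i, y m⁆ := fun m => E2_swap y a ha i m
  have g2 : ∀ m, E2 a m j = E2 a j m + phi y ⁅y m, y j⁆ := fun m => E2_swap y a ha m j
  have g3 : ∀ m, E2 a k m = E2 a m k + phi y ⁅y k, y m⁆ := fun m => E2_swap y a ha k m
  have expand : (∑ m, a j k m • E2 a i m) + (∑ m, a i k m • E2 a m j)
      + (∑ m, a i j m • E2 a k m)
      = ((∑ m, a i j m • E2 a m k) + (∑ m, a i k m • E2 a j m) + (∑ m, a j k m • E2 a m i))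
        + ((∑ m, a j k m • phi y ⁅y i, y m⁆) + (∑ m, a i k m • phi y ⁅y m, y j⁆)
          + (∑ m, a i j m • phi y ⁅y k, y m⁆)) := by
    simp only [g1, g2, g3, smul_add, Finset.sum_add_distrib]
    abel
  rw [expand, zero, add_zero]

end LieInfra

set_option linter.unusedSectionVars false
section Reduce

variable {K : Type} [Field K] {n : ℕ}
  {a : Fin n → Fin n → Fin n → K}
  {P : W K n → FreeAlg K n} {Q : FreeAlg K n →ₗ[ℤ] FRMon K n}
  (hP : IsReduction (fun _ r => r) (fun _ _ => 0) (fun _ _ => 1) (fun _ _ => 0) a P)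
  (hQ : ∀ w, Q (wd w) = qWord w)

include hP hQ

lemma QP_memT {w : W K n} (hw : MemT w) : Q (P w) = qWord w := by
  rw [hP.of_memT _ hw, hQ]

lemma LC {v w : W K n} (hv : RWord v) (hw : MemT w) :
    Q (P (v * w)) = rPart v • qWord w := by
  rw [QP_memT hP hQ ((memT_rw_mul hv).2 hw), qWord_rw_mul hv]

lemma LZ {v w : W K n} (hv : RWord v) (hw : MemT w) :
    Q (P (v * (rLtr 0 * w))) = 0 := by
  rw [← mul_assoc, LC hP hQ (rword_mul hv (rword_rLtr 0)) hw, rPart_mul, rPart_rLtr,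
    mul_zero, zero_smul]

lemma LA {v w : W K n} {i : Fin n} {r : K} (hw : MemT w)
    (hz : Q (P (v * (rLtr 0 * w))) = 0) :
    Q (P (v * (xLtr i * (rLtr r * w)))) = Q (P (v * (rLtr r * (xLtr i * w)))) := by
  have h := hP.xr v w i r ((memT_rw_mul (rword_rLtr r)).2 hw)
  simp only [mul_assoc] at h
  rw [h, map_add, hz, add_zero]

lemma LB {v w : W K n} {i j : Fin n} (hij : i < j) (hw : MemT (xLtr i * w))
    (hz : Q (P (v * (rLtr 0 * w))) = 0) :
    Q (P (v * (xLtr j * (xLtr i * w)))) =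
      Q (P (v * (rLtr 1 * (xLtr i * (xLtr j * w))))) +
        ∑ m, Q (P (v * (rLtr (a i j m) * (xLtr m * w)))) := by
  have h := hP.xx v w i j hij hw
  simp only [mul_assoc] at h
  rw [h, map_add, map_add, map_sum, hz, add_zero]

lemma LZ2 {v w : W K n} {p : Fin n} (hv : RWord v) (hw : MemT (xLtr p * w)) :
    Q (P (v * (xLtr p * (rLtr 0 * w)))) = 0 := by
  rw [LA hP hQ (memT_tail hw) (LZ hP hQ hv (memT_tail hw))]
  exact LZ hP hQ hv hw

lemma QP2 {v : W K n} (hv : RWord v) (p q : Fin n) :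
    Q (P (v * (xLtr p * xLtr q))) = rPart v • E2 a p q := by
  rcases le_or_gt p q with h | h
  · rw [LC hP hQ hv (memT_x2 h), E2, dif_pos h, qWord_x2 h]
  · have hb := LB hP hQ (v := v) (w := (1 : W K n)) h (memT_x1 q) (LZ hP hQ hv memT_one)
    simp only [mul_one] at hb
    rw [hb]
    have t1 : Q (P (v * (rLtr 1 * (xLtr q * xLtr p)))) =
        rPart v • Finsupp.single (mon2 q p h.le) 1 := by
      rw [← mul_assoc, LC hP hQ (rword_mul hv (rword_rLtr 1)) (memT_x2 h.le),
        rPart_mul, rPart_rLtr, mul_one, qWord_x2 h.le]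
    have t2 : ∀ m, Q (P (v * (rLtr (a q p m) * xLtr m))) =
        rPart v • Finsupp.single (mon1 m) (a q p m) := by
      intro m
      rw [← mul_assoc, LC hP hQ (rword_mul hv (rword_rLtr _)) (memT_x1 m),
        rPart_mul, rPart_rLtr, qWord_x1, mul_smul, Finsupp.smul_single, smul_eq_mul, mul_one]
    rw [t1]
    simp only [t2]
    rw [E2_gt h, brSum, smul_add, Finset.smul_sum]

lemma QP3 {v : W K n} (hv : RWord v) {p q s : Fin n} (hpq : p ≤ q) (hqs : q < s) :
    Q (P (v * (xLtr s * (xLtr p * xLtr q)))) =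
      rPart v • (Finsupp.single (mon3 p q s hpq hqs.le) 1
        + (∑ m, a q s m • E2 a p m) + (∑ m, a p s m • E2 a m q)) := by
  have hps : p < s := lt_of_le_of_lt hpq hqs
  rw [LB hP hQ hps (memT_x2 hpq) (LZ hP hQ hv (memT_x1 q))]
  have tA : Q (P (v * (rLtr 1 * (xLtr p * (xLtr s * xLtr q))))) =
      rPart v • (Finsupp.single (mon3 p q s hpq hqs.le) 1 + ∑ m, a q s m • E2 a p m) := by
    have hz' : Q (P ((v * (rLtr 1 * xLtr p)) * (rLtr 0 * 1))) = 0 := by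
      have h0 := LZ2 hP hQ (v := v * rLtr 1) (w := (1 : W K n)) (p := p)
        (rword_mul hv (rword_rLtr 1)) (memT_x1 p)
      simp only [mul_assoc] at h0 ⊢
      exact h0
    have hb := LB hP hQ (v := v * (rLtr 1 * xLtr p)) (w := (1 : W K n)) hqs (memT_x1 q) hz'
    simp only [mul_assoc, mul_one] at hb
    rw [hb]
    have tAa : Q (P (v * (rLtr 1 * (xLtr p * (rLtr 1 * (xLtr q * xLtr s)))))) =
        rPart v • Finsupp.single (mon3 p q s hpq hqs.le) 1 := by
      have h1 := LA hP hQ (v := v * rLtr 1) (i := p) (r := 1) (w := xLtr q * xLtr s)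
        (memT_x2 hqs.le) (LZ hP hQ (rword_mul hv (rword_rLtr 1)) (memT_x2 hqs.le))
      simp only [mul_assoc] at h1
      rw [h1]
      have h2 := LC hP hQ (v := v * (rLtr 1 * rLtr 1)) (w := xLtr p * (xLtr q * xLtr s))
        (rword_mul hv (rword_mul (rword_rLtr 1) (rword_rLtr 1))) (memT_x3 hpq hqs.le)
      simp only [mul_assoc] at h2
      rw [h2, rPart_mul, rPart_mul, rPart_rLtr, qWord_x3 hpq hqs.le]
      simp only [mul_one]
    have tAb : ∀ m, Q (P (v * (rLtr 1 * (xLtr p * (rLtr (a q s m) * xLtr m))))) =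
        rPart v • (a q s m • E2 a p m) := by
      intro m
      have h1 := LA hP hQ (v := v * rLtr 1) (i := p) (r := a q s m) (w := xLtr m)
        (memT_x1 m) (LZ hP hQ (rword_mul hv (rword_rLtr 1)) (memT_x1 m))
      simp only [mul_assoc] at h1
      rw [h1]
      have h2 := QP2 hP hQ (v := v * (rLtr 1 * rLtr (a q s m)))
        (rword_mul hv (rword_mul (rword_rLtr 1) (rword_rLtr _))) p m
      simp only [mul_assoc] at h2
      rw [h2, rPart_mul, rPart_mul, rPart_rLtr, rPart_rLtr, one_mul, mul_smul]
    rw [tAa]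
    simp only [tAb]
    rw [smul_add, Finset.smul_sum]
  have tB : ∀ m, Q (P (v * (rLtr (a p s m) * (xLtr m * xLtr q)))) =
      rPart v • (a p s m • E2 a m q) := by
    intro m
    have h2 := QP2 hP hQ (v := v * rLtr (a p s m)) (rword_mul hv (rword_rLtr _)) m q
    simp only [mul_assoc] at h2
    rw [h2, rPart_mul, rPart_rLtr, mul_smul]
  rw [tA]
  simp only [tB]
  rw [smul_add, smul_add, Finset.smul_sum, Finset.smul_sum, smul_add, Finset.smul_sum]

end Reduce

set_option maxHeartbeats 1000000 in
/-- For a finite-dimensional Lie algebra `𝒢` over a field `K` with basis `y₁,…,yₙ` and structure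
constants `a_{ij}^{(k)}` (for `i < j`), the reduction data `σᵢ := id`, `δᵢ := 0`, `c_{ij} := 1`,
`d_{ij} := 0`, `a_{ij}^{(k)}` satisfies conditions (2) and (3) of the existence theorem
(the latter by the Jacobi identity). -/
theorem lieAlgebra_reduction_conditions (K : Type) [Field K]
    (L : Type) [LieRing L] [LieAlgebra K L] {n : ℕ} (y : Module.Basis (Fin n) K L)
    (a : Fin n → Fin n → Fin n → K)
    (ha : ∀ i j : Fin n, i < j → ⁅y j, y i⁆ = ∑ k, a i j k • y k)
    (P : W K n → FreeAlg K n) (Pbar : FreeAlg K n →ₗ[ℤ] FreeAlg K n)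
    (Q : FreeAlg K n →ₗ[ℤ] FRMon K n)
    (hP : IsReduction (fun _ r => r) (fun _ _ => 0) (fun _ _ => 1) (fun _ _ => 0) a P)
    (hPbar : ∀ w, Pbar (wd w) = P w)
    (hQ : ∀ w, Q (wd w) = qWord w) :
    (∀ i j : Fin n, i < j → ∀ r : K,
      Q (P (xLtr j * xLtr i * rLtr r)) = Q (Pbar (P (xLtr j * xLtr i) * wd (rLtr r)))) ∧
    (∀ i j k : Fin n, i < j → j < k →
      Q (P (xLtr k * xLtr j * xLtr i)) = Q (Pbar (P (xLtr k * xLtr j) * wd (xLtr i)))) := by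
  constructor
  · -- Part (2) of the existence theorem
    intro i j hij r
    -- left-hand side
    have lhs : Q (P (xLtr j * xLtr i * rLtr r)) = r • E2 a j i := by
      calc Q (P (xLtr j * xLtr i * rLtr r))
          = Q (P ((xLtr j : W K n) * (xLtr i * (rLtr r * 1)))) := rfl
        _ = Q (P ((xLtr j : W K n) * (rLtr r * (xLtr i * 1)))) :=
            LA hP hQ memT_one (LZ2 hP hQ rword_one (memT_x1 j))
        _ = Q (P ((1 : W K n) * (rLtr r * (xLtr j * xLtr i)))) :=
            LA hP hQ (v := 1) (i := j) (r := r) (w := xLtr i)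
              (memT_x1 i) (LZ hP hQ rword_one (memT_x1 i))
        _ = rPart (rLtr r : W K n) • E2 a j i := QP2 hP hQ (rword_rLtr r) j i
        _ = r • E2 a j i := by rw [rPart_rLtr]
    -- expand P (x_j x_i)
    have hxx := hP.xx 1 1 i j hij (memT_x1 i)
    simp only [one_mul, mul_one] at hxx
    have w1 : P ((rLtr 1 : W K n) * xLtr i * xLtr j) = wd ((rLtr 1 : W K n) * xLtr i * xLtr j) :=
      hP.of_memT _ (by rw [mul_assoc]; exact (memT_rw_mul (rword_rLtr 1)).2 (memT_x2 hij.le))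
    have wl : ∀ m, P ((rLtr (a i j m) : W K n) * xLtr m) =
        wd ((rLtr (a i j m) : W K n) * xLtr m) :=
      fun m => hP.of_memT _ ((memT_rw_mul (rword_rLtr _)).2 (memT_x1 m))
    have w0 : P ((rLtr 0 : W K n)) = wd ((rLtr 0 : W K n)) := hP.of_memT _ (memT_r 0)
    rw [w1, w0] at hxx
    simp only [wl] at hxx
    rw [lhs, hxx, add_mul, add_mul, Finset.sum_mul]
    simp only [wd_mul, map_add, map_sum, hPbar]
    -- evaluate the three pieces
    have t1 : Q (P ((rLtr 1 : W K n) * xLtr i * xLtr j * rLtr r)) =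
        r • Finsupp.single (mon2 i j hij.le) 1 := by
      calc Q (P ((rLtr 1 : W K n) * xLtr i * xLtr j * rLtr r))
          = Q (P ((rLtr 1 * xLtr i : W K n) * (xLtr j * (rLtr r * 1)))) := rfl
        _ = Q (P ((rLtr 1 * xLtr i : W K n) * (rLtr r * (xLtr j * 1)))) :=
            LA hP hQ memT_one (LZ2 hP hQ (rword_rLtr 1) (memT_x1 i))
        _ = Q (P ((rLtr 1 : W K n) * (rLtr r * (xLtr i * xLtr j)))) :=
            LA hP hQ (v := rLtr 1) (i := i) (r := r) (w := xLtr j)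
              (memT_x1 j) (LZ hP hQ (rword_rLtr 1) (memT_x1 j))
        _ = rPart ((rLtr 1 : W K n) * rLtr r) • E2 a i j :=
            QP2 hP hQ (rword_mul (rword_rLtr 1) (rword_rLtr r)) i j
        _ = r • Finsupp.single (mon2 i j hij.le) 1 := by
            rw [rPart_mul, rPart_rLtr, rPart_rLtr, one_mul, E2_le hij.le]
    have tl : ∀ m, Q (P ((rLtr (a i j m) : W K n) * xLtr m * rLtr r)) =
        Finsupp.single (mon1 m) (a i j m * r) := by
      intro m
      calc Q (P ((rLtr (a i j m) : W K n) * xLtr m * rLtr r))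
          = Q (P ((rLtr (a i j m) : W K n) * (xLtr m * (rLtr r * 1)))) := rfl
        _ = Q (P ((rLtr (a i j m) : W K n) * (rLtr r * (xLtr m * 1)))) :=
            LA hP hQ memT_one (LZ hP hQ (rword_rLtr _) memT_one)
        _ = rPart ((rLtr (a i j m) : W K n) * rLtr r) • qWord (xLtr m : W K n) :=
            LC hP hQ (rword_mul (rword_rLtr _) (rword_rLtr _)) (memT_x1 m)
        _ = Finsupp.single (mon1 m) (a i j m * r) := by
            rw [rPart_mul, rPart_rLtr, rPart_rLtr, qWord_x1, Finsupp.smul_single,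
              smul_eq_mul, mul_one]
    have t0 : Q (P ((rLtr 0 : W K n) * rLtr r)) = 0 := by
      rw [LC hP hQ (rword_rLtr 0) (memT_r r), rPart_rLtr, zero_smul]
    rw [t1, t0]
    simp only [tl]
    rw [E2_swap y a ha j i, ← brSum_eq_phi y a ha hij, E2_le hij.le, smul_add, brSum,
      Finset.smul_sum, add_zero]
    refine congrArg₂ (· + ·) rfl (Finset.sum_congr rfl fun m _ => ?_)
    rw [Finsupp.smul_single, smul_eq_mul, mul_comm]
  · -- Part (3) of the existence theorem
    intro i j k hij hjk
    have hik : i < k := hij.trans hjk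
    -- left-hand side
    have l1 : Q (P (xLtr k * xLtr j * xLtr i)) =
        Q (P ((xLtr k : W K n) * (rLtr 1 * (xLtr i * xLtr j)))) +
          ∑ m, Q (P ((xLtr k : W K n) * (rLtr (a i j m) * xLtr m))) := by
      have hb := LB hP hQ (v := xLtr k) (w := (1 : W K n)) hij (memT_x1 i)
        (LZ2 hP hQ rword_one (memT_x1 k))
      simp only [mul_one] at hb
      exact hb
    have l2 : Q (P ((xLtr k : W K n) * (rLtr 1 * (xLtr i * xLtr j)))) =
        Finsupp.single (mon3 i j k hij.le hjk.le) 1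
          + (∑ m, a j k m • E2 a i m) + (∑ m, a i k m • E2 a m j) := by
      calc Q (P ((xLtr k : W K n) * (rLtr 1 * (xLtr i * xLtr j))))
          = Q (P ((1 : W K n) * (rLtr 1 * (xLtr k * (xLtr i * xLtr j))))) :=
            LA hP hQ (v := 1) (i := k) (r := 1) (w := xLtr i * xLtr j)
              (memT_x2 hij.le) (LZ hP hQ rword_one (memT_x2 hij.le))
        _ = rPart (rLtr 1 : W K n) • (Finsupp.single (mon3 i j k hij.le hjk.le) 1
              + (∑ m, a j k m • E2 a i m) + (∑ m, a i k m • E2 a m j)) :=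
            QP3 hP hQ (rword_rLtr 1) hij.le hjk
        _ = _ := by rw [rPart_rLtr, one_smul]
    have l3 : ∀ m, Q (P ((xLtr k : W K n) * (rLtr (a i j m) * xLtr m))) =
        a i j m • E2 a k m := by
      intro m
      calc Q (P ((xLtr k : W K n) * (rLtr (a i j m) * xLtr m)))
          = Q (P ((1 : W K n) * (rLtr (a i j m) * (xLtr k * xLtr m)))) :=
            LA hP hQ (v := 1) (i := k) (r := a i j m) (w := xLtr m)
              (memT_x1 m) (LZ hP hQ rword_one (memT_x1 m))
        _ = rPart (rLtr (a i j m) : W K n) • E2 a k m := QP2 hP hQ (rword_rLtr _) k m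
        _ = a i j m • E2 a k m := by rw [rPart_rLtr]
    -- expand P (x_k x_j)
    have hxx := hP.xx 1 1 j k hjk (memT_x1 j)
    simp only [one_mul, mul_one] at hxx
    have w1 : P ((rLtr 1 : W K n) * xLtr j * xLtr k) = wd ((rLtr 1 : W K n) * xLtr j * xLtr k) :=
      hP.of_memT _ (by rw [mul_assoc]; exact (memT_rw_mul (rword_rLtr 1)).2 (memT_x2 hjk.le))
    have wl : ∀ m, P ((rLtr (a j k m) : W K n) * xLtr m) =
        wd ((rLtr (a j k m) : W K n) * xLtr m) :=
      fun m => hP.of_memT _ ((memT_rw_mul (rword_rLtr _)).2 (memT_x1 m))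
    have w0 : P ((rLtr 0 : W K n)) = wd ((rLtr 0 : W K n)) := hP.of_memT _ (memT_r 0)
    rw [w1, w0] at hxx
    simp only [wl] at hxx
    rw [l1, l2, hxx, add_mul, add_mul, Finset.sum_mul]
    simp only [l3, wd_mul, map_add, map_sum, hPbar]
    -- evaluate the three pieces on the right
    have r0 : Q (P ((rLtr 0 : W K n) * xLtr i)) = 0 := by
      rw [LC hP hQ (rword_rLtr 0) (memT_x1 i), rPart_rLtr, zero_smul]
    have rl : ∀ m, Q (P ((rLtr (a j k m) : W K n) * xLtr m * xLtr i)) =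
        a j k m • E2 a m i := by
      intro m
      have h2 := QP2 hP hQ (v := rLtr (a j k m)) (rword_rLtr _) m i
      rw [rPart_rLtr] at h2
      exact h2
    have r1 : Q (P ((rLtr 1 : W K n) * xLtr j * xLtr k * xLtr i)) =
        Finsupp.single (mon3 i j k hij.le hjk.le) 1
          + (∑ m, a i j m • E2 a m k) + (∑ m, a i k m • E2 a j m) := by
      have sb := LB hP hQ (v := (rLtr 1 * xLtr j : W K n)) (w := (1 : W K n)) hik
        (memT_x1 i) (LZ2 hP hQ (rword_rLtr 1) (memT_x1 j))
      simp only [mul_one] at sb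
      have sc : Q (P (((rLtr 1 * xLtr j) : W K n) * (rLtr 1 * (xLtr i * xLtr k)))) =
          Finsupp.single (mon3 i j k hij.le hjk.le) 1 + ∑ m, a i j m • E2 a m k := by
        calc Q (P (((rLtr 1 * xLtr j) : W K n) * (rLtr 1 * (xLtr i * xLtr k))))
            = Q (P ((rLtr 1 : W K n) * (rLtr 1 * (xLtr j * (xLtr i * xLtr k))))) :=
              LA hP hQ (v := rLtr 1) (i := j) (r := 1) (w := xLtr i * xLtr k)
                (memT_x2 hik.le) (LZ hP hQ (rword_rLtr 1) (memT_x2 hik.le))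
          _ = Q (P (((rLtr 1 * rLtr 1) : W K n) * (rLtr 1 * (xLtr i * (xLtr j * xLtr k)))))
              + ∑ m, Q (P (((rLtr 1 * rLtr 1) : W K n) * (rLtr (a i j m) * (xLtr m * xLtr k)))) :=
              LB hP hQ hij (memT_x2 hik.le)
                (LZ hP hQ (rword_mul (rword_rLtr 1) (rword_rLtr 1)) (memT_x1 k))
          _ = Finsupp.single (mon3 i j k hij.le hjk.le) 1 + ∑ m, a i j m • E2 a m k := by
              have u1 : Q (P (((rLtr 1 * rLtr 1) : W K n) *
                  (rLtr 1 * (xLtr i * (xLtr j * xLtr k))))) =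
                  Finsupp.single (mon3 i j k hij.le hjk.le) 1 := by
                have hc := LC hP hQ (v := (rLtr 1 * (rLtr 1 * rLtr 1) : W K n))
                  (w := xLtr i * (xLtr j * xLtr k))
                  (rword_mul (rword_rLtr 1) (rword_mul (rword_rLtr 1) (rword_rLtr 1)))
                  (memT_x3 hij.le hjk.le)
                simp only [mul_assoc] at hc ⊢
                rw [hc, rPart_mul, rPart_mul, rPart_rLtr, qWord_x3 hij.le hjk.le]
                simp only [mul_one, one_smul, one_mul]
              have u2 : ∀ m, Q (P (((rLtr 1 * rLtr 1) : W K n) *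
                  (rLtr (a i j m) * (xLtr m * xLtr k)))) = a i j m • E2 a m k := by
                intro m
                have hc := QP2 hP hQ (v := (rLtr 1 * (rLtr 1 * rLtr (a i j m)) : W K n))
                  (rword_mul (rword_rLtr 1) (rword_mul (rword_rLtr 1) (rword_rLtr _))) m k
                simp only [mul_assoc] at hc ⊢
                rw [hc, rPart_mul, rPart_mul, rPart_rLtr, rPart_rLtr, one_mul, one_mul]
              rw [u1]
              simp only [u2]
      have sd : ∀ m, Q (P (((rLtr 1 * xLtr j) : W K n) * (rLtr (a i k m) * xLtr m))) =
          a i k m • E2 a j m := by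
        intro m
        calc Q (P (((rLtr 1 * xLtr j) : W K n) * (rLtr (a i k m) * xLtr m)))
            = Q (P ((rLtr 1 : W K n) * (rLtr (a i k m) * (xLtr j * xLtr m)))) :=
              LA hP hQ (v := rLtr 1) (i := j) (r := a i k m) (w := xLtr m)
                (memT_x1 m) (LZ hP hQ (rword_rLtr 1) (memT_x1 m))
          _ = a i k m • E2 a j m := by
              have hc := QP2 hP hQ (v := (rLtr 1 * rLtr (a i k m) : W K n))
                (rword_mul (rword_rLtr 1) (rword_rLtr _)) j m
              simp only [mul_assoc] at hc
              rw [hc, rPart_mul, rPart_rLtr, rPart_rLtr, one_mul]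
      calc Q (P ((rLtr 1 : W K n) * xLtr j * xLtr k * xLtr i))
          = Q (P (((rLtr 1 * xLtr j) : W K n) * (xLtr k * xLtr i))) := rfl
        _ = Q (P (((rLtr 1 * xLtr j) : W K n) * (rLtr 1 * (xLtr i * xLtr k))))
            + ∑ m, Q (P (((rLtr 1 * xLtr j) : W K n) * (rLtr (a i k m) * xLtr m))) := sb
        _ = Finsupp.single (mon3 i j k hij.le hjk.le) 1
              + (∑ m, a i j m • E2 a m k) + (∑ m, a i k m • E2 a j m) := by
            rw [sc]
            simp only [sd]
    rw [r1, r0]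
    simp only [rl]
    rw [add_zero]
    -- final rearrangement via the Jacobi identity
    have fin := final_identity y a ha hij hjk
    calc Finsupp.single (mon3 i j k hij.le hjk.le) 1 + (∑ m, a j k m • E2 a i m)
          + (∑ m, a i k m • E2 a m j) + (∑ m, a i j m • E2 a k m)
        = Finsupp.single (mon3 i j k hij.le hjk.le) 1 + ((∑ m, a j k m • E2 a i m)
            + (∑ m, a i k m • E2 a m j) + (∑ m, a i j m • E2 a k m)) := by abel
      _ = Finsupp.single (mon3 i j k hij.le hjk.le) 1 + ((∑ m, a i j m • E2 a m k)
            + (∑ m, a i k m • E2 a j m) + (∑ m, a j k m • E2 a m i)) := by rw [fin]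
      _ = Finsupp.single (mon3 i j k hij.le hjk.le) 1 + (∑ m, a i j m • E2 a m k)
            + (∑ m, a i k m • E2 a j m) + (∑ m, a j k m • E2 a m i) := by abel
end
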